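/- arXiv:2404.10377 — 4 statements merged into one kernel-verified Lean document; each statement's English description precedes it below -/
import Mathlib

section
/- Let K be an algebraically closed field of characteristic 0, let p ∈ K[x,y] be irreducible with p ∉ K[x] and p ∉ K[y], and let m > 1 be an integer. If q ∈ K(x,y) is a rational function whose denominator is not divisible by p, f ∈ K(x), g ∈ K(y), and q·p^m = f − g, then q = 0 (equivalently f − g = 0). -/
open MvPolynomial

noncomputable section

/-- `K[x,y]` as multivariate polynomials in two variables. -/
abbrev P2 (K : Type*) [Field K] := MvPolynomial (Fin 2) K

variable {K : Type*} [Field K]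

/-- Embedding of a univariate polynomial as a polynomial in the first variable `x`. -/
def toX (u : Polynomial K) : P2 K := Polynomial.aeval (X 0) u

/-- Embedding of a univariate polynomial as a polynomial in the second variable `y`. -/
def toY (u : Polynomial K) : P2 K := Polynomial.aeval (X 1) u

/-- The image of `f ∈ K(x)` in `K(x,y)`, the fraction field of `K[x,y]`. -/
def embX (f : RatFunc K) : FractionRing (P2 K) :=
  algebraMap (P2 K) (FractionRing (P2 K)) (toX f.num) /
    algebraMap (P2 K) (FractionRing (P2 K)) (toX f.denom)

/-- The image of `g ∈ K(y)` in `K(x,y)`. -/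
def embY (g : RatFunc K) : FractionRing (P2 K) :=
  algebraMap (P2 K) (FractionRing (P2 K)) (toY g.num) /
    algebraMap (P2 K) (FractionRing (P2 K)) (toY g.denom)

lemma psiX_toX (u : Polynomial K) :
    (aeval ![Polynomial.X, 0] : P2 K →ₐ[K] Polynomial K) (toX u) = u := by
  unfold toX
  rw [← Polynomial.aeval_algHom_apply]
  simp

lemma psiY_toY (u : Polynomial K) :
    (aeval ![0, Polynomial.X] : P2 K →ₐ[K] Polynomial K) (toY u) = u := by
  unfold toY
  rw [← Polynomial.aeval_algHom_apply]
  simp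

lemma toX_injective : Function.Injective (toX (K := K)) := by
  intro u v huv
  have := congrArg (aeval ![Polynomial.X, 0] : P2 K →ₐ[K] Polynomial K) huv
  rwa [psiX_toX, psiX_toX] at this

lemma toY_injective : Function.Injective (toY (K := K)) := by
  intro u v huv
  have := congrArg (aeval ![0, Polynomial.X] : P2 K →ₐ[K] Polynomial K) huv
  rwa [psiY_toY, psiY_toY] at this

lemma swap_toX (u : Polynomial K) :
    rename (Equiv.swap (0 : Fin 2) 1) (toX u) = toY u := by
  unfold toX toY
  rw [← Polynomial.aeval_algHom_apply]
  simp

lemma swap_toY (u : Polynomial K) :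
    rename (Equiv.swap (0 : Fin 2) 1) (toY u) = toX u := by
  unfold toX toY
  rw [← Polynomial.aeval_algHom_apply]
  simp

lemma finSuccEquiv_toY (u : Polynomial K) :
    (finSuccEquiv K 1) (toY u) = Polynomial.C (Polynomial.aeval ((X (0 : Fin 1) : MvPolynomial (Fin 1) K)) u) := by
  unfold toY
  rw [← Polynomial.aeval_algHom_apply (finSuccEquiv K 1),
      show ((finSuccEquiv K 1) (X 1) : Polynomial (MvPolynomial (Fin 1) K)) = Polynomial.C (X 0)
        from by rw [show (1 : Fin 2) = Fin.succ 0 from rfl, finSuccEquiv_X_succ]]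
  exact Polynomial.aeval_algHom_apply (Polynomial.CAlgHom (R := K)) (X 0) u

lemma aevalX0_inj : Function.Injective
    (fun u : Polynomial K => Polynomial.aeval (X (0 : Fin 1) : MvPolynomial (Fin 1) K) u) := by
  intro u v huv
  have := congrArg (aeval ![Polynomial.X] : MvPolynomial (Fin 1) K →ₐ[K] Polynomial K) huv
  simpa [← Polynomial.aeval_algHom_apply] using this

lemma aevalX0_surj : ∀ r : MvPolynomial (Fin 1) K,
    ∃ u : Polynomial K, Polynomial.aeval ((X (0 : Fin 1) : MvPolynomial (Fin 1) K)) u = r := by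
  intro r
  induction r using MvPolynomial.induction_on with
  | C a => exact ⟨Polynomial.C a, by simp⟩
  | add q r hq hr =>
      obtain ⟨u, hu⟩ := hq; obtain ⟨v, hv⟩ := hr
      exact ⟨u + v, by simp [hu, hv]⟩
  | mul_X q i hq =>
      obtain ⟨u, hu⟩ := hq
      exact ⟨u * Polynomial.X, by simp [hu, Fin.eq_zero i]⟩

lemma eq_toY_of_dvd {d : P2 K} {u : Polynomial K} (hu : u ≠ 0) (hd : d ∣ toY u) :
    ∃ v, d = toY v := by
  have hu' : (Polynomial.aeval ((X (0 : Fin 1) : MvPolynomial (Fin 1) K)) u : MvPolynomial (Fin 1) K) ≠ 0 := by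
    intro h0
    exact hu (aevalX0_inj (by simpa using h0))
  have hd' : (finSuccEquiv K 1) d ∣ Polynomial.C (Polynomial.aeval ((X (0 : Fin 1) : MvPolynomial (Fin 1) K)) u) := by
    rw [← finSuccEquiv_toY]
    exact map_dvd (finSuccEquiv K 1) hd
  obtain ⟨c, hc⟩ := hd'
  have hC0 : Polynomial.C (Polynomial.aeval ((X (0 : Fin 1) : MvPolynomial (Fin 1) K)) u) ≠ 0 := by
    simpa using hu'
  have hdne : (finSuccEquiv K 1) d ≠ 0 := fun h0 => hC0 (by rw [hc, h0, zero_mul])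
  have hcne : c ≠ 0 := fun h0 => hC0 (by rw [hc, h0, mul_zero])
  have hdeg : ((finSuccEquiv K 1) d).natDegree = 0 := by
    have := congrArg Polynomial.natDegree hc
    rw [Polynomial.natDegree_C, Polynomial.natDegree_mul hdne hcne] at this
    omega
  obtain ⟨r, hr⟩ := Polynomial.natDegree_eq_zero.mp hdeg
  obtain ⟨v, hv⟩ := aevalX0_surj r
  refine ⟨v, (finSuccEquiv K 1).injective ?_⟩
  rw [finSuccEquiv_toY, ← hr, hv]

lemma eq_toX_of_dvd {d : P2 K} {u : Polynomial K} (hu : u ≠ 0) (hd : d ∣ toX u) :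
    ∃ v, d = toX v := by
  have hd' : rename (Equiv.swap (0 : Fin 2) 1) d ∣ toY u := by
    rw [← swap_toX]
    exact map_dvd (rename (Equiv.swap (0 : Fin 2) 1) : P2 K →ₐ[K] P2 K) hd
  obtain ⟨v, hv⟩ := eq_toY_of_dvd hu hd'
  refine ⟨v, ?_⟩
  have := congrArg (rename (Equiv.swap (0 : Fin 2) 1) : P2 K →ₐ[K] P2 K) hv
  rw [swap_toY] at this
  have h2 : rename (Equiv.swap (0 : Fin 2) 1)
      (rename (Equiv.swap (0 : Fin 2) 1) d) = d := by
    rw [rename_rename]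
    have hid : (⇑(Equiv.swap (0 : Fin 2) 1) ∘ ⇑(Equiv.swap (0 : Fin 2) 1)) = id := by
      ext x; simp
    rw [hid, rename_id, AlgHom.id_apply]
  rw [← h2, this]

lemma pderiv0_toX (u : Polynomial K) : pderiv 0 (toX u) = toX u.derivative := by
  unfold toX
  induction u using Polynomial.induction_on' with
  | add p q hp hq => simp [hp, hq]
  | monomial n a =>
      simp only [Polynomial.aeval_monomial, Polynomial.derivative_monomial,
        algebraMap_eq, map_mul, map_natCast]
      rw [pderiv_C_mul, pderiv_pow, pderiv_X_self]
      ring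

lemma pderiv1_toX (u : Polynomial K) : pderiv 1 (toX u) = 0 := by
  unfold toX
  induction u using Polynomial.induction_on' with
  | add p q hp hq => simp [hp, hq]
  | monomial n a =>
      simp only [Polynomial.aeval_monomial, algebraMap_eq]
      rw [pderiv_C_mul, pderiv_pow, pderiv_X_of_ne (by decide : (0 : Fin 2) ≠ 1)]
      ring

lemma pderiv1_toY (u : Polynomial K) : pderiv 1 (toY u) = toY u.derivative := by
  unfold toY
  induction u using Polynomial.induction_on' with
  | add p q hp hq => simp [hp, hq]
  | monomial n a =>
      simp only [Polynomial.aeval_monomial, Polynomial.derivative_monomial,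
        algebraMap_eq, map_mul, map_natCast]
      rw [pderiv_C_mul, pderiv_pow, pderiv_X_self]
      ring

lemma pderiv0_toY (u : Polynomial K) : pderiv 0 (toY u) = 0 := by
  unfold toY
  induction u using Polynomial.induction_on' with
  | add p q hp hq => simp [hp, hq]
  | monomial n a =>
      simp only [Polynomial.aeval_monomial, algebraMap_eq]
      rw [pderiv_C_mul, pderiv_pow, pderiv_X_of_ne (by decide : (1 : Fin 2) ≠ 0)]
      ring

lemma toX_mul (u v : Polynomial K) : toX (u * v) = toX u * toX v := by
  unfold toX; exact map_mul _ _ _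
lemma toX_sub (u v : Polynomial K) : toX (u - v) = toX u - toX v := by
  unfold toX; exact map_sub _ _ _
lemma toY_mul (u v : Polynomial K) : toY (u * v) = toY u * toY v := by
  unfold toY; exact map_mul _ _ _
lemma toY_sub (u v : Polynomial K) : toY (u - v) = toY u - toY v := by
  unfold toY; exact map_sub _ _ _
lemma toX_C (α : K) : toX (Polynomial.C α) = C α := by unfold toX; simp [algebraMap_eq]
lemma toY_C (α : K) : toY (Polynomial.C α) = C α := by unfold toY; simp [algebraMap_eq]

lemma flat_of_wronskian [CharZero K] {f : RatFunc K}
    (h : f.num.derivative * f.denom - f.num * f.denom.derivative = 0) :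
    ∃ α β : K, f.num = Polynomial.C α ∧ f.denom = Polynomial.C β := by
  have hden : f.denom ≠ 0 := f.denom_ne_zero
  have hW : f.num.derivative * f.denom = f.num * f.denom.derivative := sub_eq_zero.mp h
  have hdvd : f.denom ∣ f.num * f.denom.derivative := ⟨f.num.derivative, by rw [← hW]; ring⟩
  have cop : IsCoprime f.denom f.num := (RatFunc.isCoprime_num_denom f).symm
  have hdd : f.denom ∣ f.denom.derivative := cop.dvd_of_dvd_mul_left hdvd
  have hd0 : f.denom.derivative = 0 := by
    by_contra hne
    exact absurd (Polynomial.degree_le_of_dvd hdd hne)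
      (not_le.mpr (Polynomial.degree_derivative_lt hden))
  obtain ⟨β, hβ⟩ := Polynomial.natDegree_eq_zero.mp
    (Polynomial.natDegree_eq_zero_of_derivative_eq_zero hd0)
  have hnum0 : f.num.derivative = 0 := by
    have := hW
    rw [hd0, mul_zero] at this
    rcases mul_eq_zero.mp this with h' | h'
    · exact h'
    · exact absurd h' hden
  obtain ⟨α, hα⟩ := Polynomial.natDegree_eq_zero.mp
    (Polynomial.natDegree_eq_zero_of_derivative_eq_zero hnum0)
  exact ⟨α, β, hα.symm, hβ.symm⟩


/-- If `p` is irreducible, not univariate, `m > 1`, and `q = a/b` (in lowest or any terms,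
with `p ∤ b`) satisfies `q·p^m = f − g` with `f ∈ K(x)`, `g ∈ K(y)`, then `q = 0`. -/
theorem statement0 [IsAlgClosed K] [CharZero K]
    (p : P2 K) (hp : Irreducible p)
    (hpx : ¬ ∃ u : Polynomial K, p = toX u)
    (hpy : ¬ ∃ u : Polynomial K, p = toY u)
    (m : ℕ) (hm : 1 < m)
    (a b : P2 K) (hb : b ≠ 0) (hpb : ¬ p ∣ b)
    (f : RatFunc K) (g : RatFunc K)
    (h : (algebraMap (P2 K) (FractionRing (P2 K)) a /
            algebraMap (P2 K) (FractionRing (P2 K)) b) *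
          algebraMap (P2 K) (FractionRing (P2 K)) (p ^ m) = embX f - embY g) :
    a = 0 := by
  classical
  have hprime : Prime p := UniqueFactorizationMonoid.irreducible_iff_prime.mp hp
  have hAinj : Function.Injective (algebraMap (P2 K) (FractionRing (P2 K))) :=
    IsFractionRing.injective _ _
  have hfd : toX f.denom ≠ 0 := fun h0 =>
    f.denom_ne_zero (toX_injective (by simpa [toX] using h0))
  have hgd : toY g.denom ≠ 0 := fun h0 =>
    g.denom_ne_zero (toY_injective (by simpa [toY] using h0))
  have hb' : algebraMap (P2 K) (FractionRing (P2 K)) b ≠ 0 :=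
    fun h0 => hb (hAinj (by simpa using h0))
  have hfd' : algebraMap (P2 K) (FractionRing (P2 K)) (toX f.denom) ≠ 0 :=
    fun h0 => hfd (hAinj (by simpa using h0))
  have hgd' : algebraMap (P2 K) (FractionRing (P2 K)) (toY g.denom) ≠ 0 :=
    fun h0 => hgd (hAinj (by simpa using h0))
  have E : a * p ^ m * toX f.denom * toY g.denom
      = b * (toX f.num * toY g.denom - toY g.num * toX f.denom) := by
    apply hAinj
    unfold embX embY at h
    rw [div_mul_eq_mul_div, div_sub_div _ _ hfd' hgd',
      div_eq_div_iff hb' (mul_ne_zero hfd' hgd')] at h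
    simp only [map_mul, map_sub, map_pow] at h ⊢
    linear_combination h
  have hWdvd : p ^ m ∣ toX f.num * toY g.denom - toY g.num * toX f.denom :=
    hprime.pow_dvd_of_dvd_mul_left m hpb ⟨a * toX f.denom * toY g.denom, by rw [← E]; ring⟩
  obtain ⟨c, hc⟩ := hWdvd
  set W : P2 K := toX f.num * toY g.denom - toY g.num * toX f.denom with hWdef
  have hm0 : m ≠ 0 := by omega
  have hm1 : m - 1 ≠ 0 := by omega
  have hpW : p ∣ W := (dvd_pow_self p hm0).trans ⟨c, hc⟩
  have hpdW : ∀ i : Fin 2, p ∣ pderiv i W := by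
    intro i
    rw [hc, pderiv_mul, pderiv_pow]
    exact dvd_add
      (dvd_mul_of_dvd_left
        (dvd_mul_of_dvd_left (dvd_mul_of_dvd_right (dvd_pow_self p hm1) _) _) _)
      (dvd_mul_of_dvd_left (dvd_pow_self p hm0) _)
  -- x-direction
  have hdW0 : pderiv 0 W = toX f.num.derivative * toY g.denom
      - toY g.num * toX f.denom.derivative := by
    rw [hWdef, map_sub, pderiv_mul, pderiv_mul, pderiv0_toX, pderiv0_toX,
      pderiv0_toY, pderiv0_toY]
    ring
  have hkey0 : p ∣ toY g.denom *
      toX (f.num.derivative * f.denom - f.num * f.denom.derivative) := by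
    have hid : toY g.denom *
        toX (f.num.derivative * f.denom - f.num * f.denom.derivative)
        = (pderiv 0 W) * toX f.denom - W * toX f.denom.derivative := by
      rw [hdW0, hWdef, toX_sub, toX_mul, toX_mul]
      ring
    rw [hid]
    exact dvd_sub ((hpdW 0).mul_right _) (hpW.mul_right _)
  have hwr0 : f.num.derivative * f.denom - f.num * f.denom.derivative = 0 := by
    by_contra hne
    rcases hprime.dvd_mul.mp hkey0 with h' | h'
    · exact hpy (eq_toY_of_dvd g.denom_ne_zero h' |>.imp fun v hv => hv) |>.elim
    · exact hpx (eq_toX_of_dvd hne h' |>.imp fun v hv => hv) |>.elim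
  -- y-direction
  have hdW1 : pderiv 1 W = toX f.num * toY g.denom.derivative
      - toY g.num.derivative * toX f.denom := by
    rw [hWdef, map_sub, pderiv_mul, pderiv_mul, pderiv1_toY, pderiv1_toY,
      pderiv1_toX, pderiv1_toX]
    ring
  have hkey1 : p ∣ toX f.denom *
      toY (g.num.derivative * g.denom - g.num * g.denom.derivative) := by
    have hid : toX f.denom *
        toY (g.num.derivative * g.denom - g.num * g.denom.derivative)
        = W * toY g.denom.derivative - (pderiv 1 W) * toY g.denom := by
      rw [hdW1, hWdef, toY_sub, toY_mul, toY_mul]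
      ring
    rw [hid]
    exact dvd_sub (hpW.mul_right _) ((hpdW 1).mul_right _)
  have hwr1 : g.num.derivative * g.denom - g.num * g.denom.derivative = 0 := by
    by_contra hne
    rcases hprime.dvd_mul.mp hkey1 with h' | h'
    · exact hpx (eq_toX_of_dvd f.denom_ne_zero h' |>.imp fun v hv => hv) |>.elim
    · exact hpy (eq_toY_of_dvd hne h' |>.imp fun v hv => hv) |>.elim
  obtain ⟨α, β, hα, hβ⟩ := flat_of_wronskian hwr0
  obtain ⟨γ, δ, hγ, hδ⟩ := flat_of_wronskian hwr1
  have hWC : W = C (α * δ - γ * β) := by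
    rw [hWdef, hα, hβ, hγ, hδ, toX_C, toX_C, toY_C, toY_C, map_sub, map_mul, map_mul]
  have hW0 : W = 0 := by
    rcases eq_or_ne (α * δ - γ * β) 0 with he | he
    · rw [hWC, he, map_zero]
    · exfalso
      apply hp.not_isUnit
      have hu : IsUnit (W) := by
        rw [hWC]
        exact (isUnit_iff_ne_zero.mpr he).map (C : K →+* P2 K)
      exact isUnit_of_dvd_unit hpW hu
  have h0 : a * (p ^ m * (toX f.denom * toY g.denom)) = 0 := by
    rw [hW0, mul_zero] at E
    rw [← E]; ring
  rcases mul_eq_zero.mp h0 with h' | h'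
  · exact h'
  · exact absurd h' (mul_ne_zero (pow_ne_zero m hprime.ne_zero) (mul_ne_zero hfd hgd))
end
end

section
/- Let K be an algebraically closed field of characteristic 0 and let p ∈ K[x,y] be irreducible with p ∉ K[x] and p ∉ K[y]. Then the set F(p) = {(f,g) ∈ K(x) × K(y) : the numerator of f − g is divisible by p} is a subfield of the product ring K(x) × K(y) under componentwise addition and multiplication. -/
open MvPolynomial

noncomputable section

variable {K : Type*} [Field K]

/-- The near-separated polynomial `f_n(x)·g_d(y) − g_n(y)·f_d(x)`; `p` divides it
iff `p` divides the numerator of `f − g`. -/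
def NS (f g : RatFunc K) : P2 K := toX f.num * toY g.denom - toY g.num * toX f.denom

/-- Units of `K[x,y]` are constants. -/
lemma P2.isUnit_eq_C {v : P2 K} (h : IsUnit v) : ∃ c : K, v = C c := by
  have h1 : IsUnit (finSuccEquiv K 1 v) := h.map _
  obtain ⟨r, hr, hrv⟩ := Polynomial.isUnit_iff.mp h1
  have h2 : IsUnit (finSuccEquiv K 0 r) := hr.map _
  obtain ⟨s, hs, hsr⟩ := Polynomial.isUnit_iff.mp h2
  obtain ⟨k, rfl⟩ := C_surjective (Fin 0) s
  have hr' : r = C k := (finSuccEquiv K 0).injective (by rw [← hsr]; simp [finSuccEquiv_apply])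
  refine ⟨k, (finSuccEquiv K 1).injective ?_⟩
  rw [← hrv, hr']
  simp [finSuccEquiv_apply]

lemma prime_X_sub_C_P2 (a : K) : Prime ((X 0 : P2 K) - C a) := by
  rw [← MulEquiv.prime_iff (finSuccEquiv K 1).toRingEquiv.toMulEquiv]
  have h : (finSuccEquiv K 1).toRingEquiv.toMulEquiv ((X 0 : P2 K) - C a)
      = Polynomial.X - Polynomial.C (C a) := by
    show (finSuccEquiv K 1) ((X 0 : P2 K) - C a) = _
    simp [finSuccEquiv_apply]
  rw [h]
  exact Polynomial.prime_X_sub_C _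

lemma keyX [IsAlgClosed K] (p : P2 K) (hp : Irreducible p)
    (hpx : ¬ ∃ u : Polynomial K, p = toX u) {u : Polynomial K} (hu : u ≠ 0) :
    ¬ p ∣ toX u := by
  intro hdvd
  have hprime : Prime p := UniqueFactorizationMonoid.irreducible_iff_prime.mp hp
  have hsplit := (IsAlgClosed.splits u).eq_prod_roots
  have htoX : toX u = C u.leadingCoeff * (u.roots.map fun a => (X 0 : P2 K) - C a).prod := by
    conv_lhs => rw [show toX u = Polynomial.aeval (X 0 : P2 K) u from rfl, hsplit]
    rw [map_mul, map_multiset_prod, Multiset.map_map]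
    simp [Function.comp_def, algebraMap_eq]
  rw [htoX] at hdvd
  rcases hprime.2.2 _ _ hdvd with h | h
  · have hc : u.leadingCoeff ≠ 0 := Polynomial.leadingCoeff_ne_zero.mpr hu
    have : IsUnit (C u.leadingCoeff : P2 K) :=
      (isUnit_iff_ne_zero.mpr hc).map (C : K →+* P2 K)
    exact hp.not_isUnit (isUnit_of_dvd_unit h this)
  · obtain ⟨q, hq, hpq⟩ := hprime.exists_mem_multiset_dvd h
    obtain ⟨a, -, rfl⟩ := Multiset.mem_map.mp hq
    obtain ⟨w, hw⟩ := (hprime.dvd_prime_iff_associated (prime_X_sub_C_P2 a)).mp hpq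
    obtain ⟨c, hc⟩ := P2.isUnit_eq_C (w⁻¹).isUnit
    refine hpx ⟨(Polynomial.X - Polynomial.C a) * Polynomial.C c, ?_⟩
    have h1 := (Units.mul_inv_cancel_right p w).symm
    rw [hw] at h1
    rw [h1, hc]
    show _ = Polynomial.aeval (X 0 : P2 K) _
    simp [algebraMap_eq]

lemma keyY [IsAlgClosed K] (p : P2 K) (hp : Irreducible p)
    (hpy : ¬ ∃ u : Polynomial K, p = toY u) {u : Polynomial K} (hu : u ≠ 0) :
    ¬ p ∣ toY u := by
  intro hdvd
  set e := renameEquiv K (Equiv.swap (0 : Fin 2) 1) with he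
  have hprime : Prime p := UniqueFactorizationMonoid.irreducible_iff_prime.mp hp
  have h1 : Irreducible (e p) :=
    ((MulEquiv.prime_iff e.toRingEquiv.toMulEquiv).mpr hprime).irreducible
  have hXY : ∀ v : Polynomial K, e (toY v) = toX v := by
    intro v
    show e (Polynomial.aeval (X 1) v) = Polynomial.aeval (X 0) v
    have h := Polynomial.aeval_algHom_apply e (X 1) v
    rw [← h]
    simp [he, Equiv.swap_apply_right]
  have hYX : ∀ v : Polynomial K, e (toX v) = toY v := by
    intro v
    show e (Polynomial.aeval (X 0) v) = Polynomial.aeval (X 1) v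
    have h := Polynomial.aeval_algHom_apply e (X 0) v
    rw [← h]
    simp [he, Equiv.swap_apply_left]
  have h2 : ¬ ∃ v : Polynomial K, e p = toX v := by
    rintro ⟨v, hv⟩
    refine hpy ⟨v, ?_⟩
    have := congrArg e.symm hv
    rw [AlgEquiv.symm_apply_apply] at this
    rw [this]
    refine e.injective ?_
    rw [AlgEquiv.apply_symm_apply, hXY]
  have h3 : e p ∣ toX u := by
    have := map_dvd e hdvd
    rwa [hXY u] at this
  exact keyX (e p) h1 h2 hu h3

set_option maxHeartbeats 2000000 in
set_option synthInstance.maxHeartbeats 200000 in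
/-- `F(p) = {(f,g) : p ∣ numerator of f − g}` is a subfield of `K(x) × K(y)`:
a subring containing `1` that is closed under inverses of nonzero elements. -/
theorem statement1 [IsAlgClosed K] [CharZero K]
    (p : P2 K) (hp : Irreducible p)
    (hpx : ¬ ∃ u : Polynomial K, p = toX u)
    (hpy : ¬ ∃ u : Polynomial K, p = toY u) :
    ∃ S : Subring (RatFunc K × RatFunc K),
      (S : Set (RatFunc K × RatFunc K)) = {fg | p ∣ NS fg.1 fg.2} ∧
      ∀ z ∈ S, z ≠ 0 → z⁻¹ ∈ S := by
  classical
  have hprime : Prime p := UniqueFactorizationMonoid.irreducible_iff_prime.mp hp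
  set I : Ideal (P2 K) := Ideal.span {p} with hIdef
  haveI hI : I.IsPrime := (Ideal.span_singleton_prime hprime.ne_zero).mpr hprime
  let A := P2 K ⧸ I
  let L := FractionRing A
  let mkL : P2 K →+* L := (algebraMap A L).comp (Ideal.Quotient.mk I)
  have hmkL : ∀ q : P2 K, mkL q = 0 ↔ p ∣ q := by
    intro q
    show algebraMap A L (Ideal.Quotient.mk I q) = 0 ↔ p ∣ q
    rw [map_eq_zero_iff _ (IsFractionRing.injective A L)]
    exact Ideal.Quotient.eq_zero_iff_dvd p q
  let θx : Polynomial K →+* L := mkL.comp ((Polynomial.aeval (X 0 : P2 K)).toRingHom)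
  let θy : Polynomial K →+* L := mkL.comp ((Polynomial.aeval (X 1 : P2 K)).toRingHom)
  have hθx : ∀ u : Polynomial K, u ≠ 0 → θx u ≠ 0 := by
    intro u hu
    rw [show θx u = mkL (toX u) from rfl, Ne, hmkL]
    exact keyX p hp hpx hu
  have hθy : ∀ u : Polynomial K, u ≠ 0 → θy u ≠ 0 := by
    intro u hu
    rw [show θy u = mkL (toY u) from rfl, Ne, hmkL]
    exact keyY p hp hpy hu
  have hcx : nonZeroDivisors (Polynomial K) ≤ Submonoid.comap θx (nonZeroDivisors L) := by
    intro u hu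
    exact mem_nonZeroDivisors_iff_ne_zero.mpr
      (hθx u (mem_nonZeroDivisors_iff_ne_zero.mp hu))
  have hcy : nonZeroDivisors (Polynomial K) ≤ Submonoid.comap θy (nonZeroDivisors L) := by
    intro u hu
    exact mem_nonZeroDivisors_iff_ne_zero.mpr
      (hθy u (mem_nonZeroDivisors_iff_ne_zero.mp hu))
  let φ : RatFunc K →+* L := RatFunc.liftRingHom θx hcx
  let ψ : RatFunc K →+* L := RatFunc.liftRingHom θy hcy
  have hkey : ∀ f g : RatFunc K, (φ f = ψ g ↔ p ∣ NS f g) := by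
    intro f g
    rw [show φ f = θx f.num / θx f.denom from RatFunc.liftRingHom_apply _ _ _,
      show ψ g = θy g.num / θy g.denom from RatFunc.liftRingHom_apply _ _ _,
      div_eq_div_iff (hθx _ (RatFunc.denom_ne_zero f)) (hθy _ (RatFunc.denom_ne_zero g))]
    rw [show θx f.num * θy g.denom = mkL (toX f.num * toY g.denom) from (map_mul mkL _ _).symm,
      show θy g.num * θx f.denom = mkL (toY g.num * toX f.denom) from (map_mul mkL _ _).symm]
    rw [← sub_eq_zero, ← map_sub, hmkL]
    rfl
  refine ⟨RingHom.eqLocus (φ.comp (RingHom.fst _ _)) (ψ.comp (RingHom.snd _ _)), ?_, ?_⟩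
  · ext fg
    exact hkey fg.1 fg.2
  · rintro ⟨f, g⟩ hz hz0
    have hmem : φ f = ψ g := hz
    have hg : g ≠ 0 → f ≠ 0 := by
      intro hgne hf
      apply hgne
      have : ψ g = 0 := by rw [← hmem, hf, map_zero]
      exact (map_eq_zero ψ).mp this
    have hf0 : f ≠ 0 := by
      intro hf
      rcases eq_or_ne g 0 with hgeq | hgne
      · exact hz0 (Prod.ext hf hgeq)
      · exact hg hgne hf
    have hg0 : g ≠ 0 := by
      intro hgeq
      apply hf0
      have : φ f = 0 := by rw [hmem, hgeq, map_zero]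
      exact (map_eq_zero φ).mp this
    show φ ((f, g)⁻¹).1 = ψ ((f, g)⁻¹).2
    show φ f⁻¹ = ψ g⁻¹
    rw [map_inv₀, map_inv₀, hmem]
end
end

section
/- Let K be a field of characteristic 0, and let f, F ∈ K(x) and g, G ∈ K(y) be non-constant rational functions. Then f_n·g_d − g_n·f_d divides F_n·G_d − G_n·F_d in K[x,y] if and only if there exists h ∈ K(t) with h∘f = F and h∘g = G. -/
open MvPolynomial

noncomputable section

variable {K : Type*} [Field K]

/-- Composition `h ∘ f` of rational functions. -/
def comp (h f : RatFunc K) : RatFunc K := RatFunc.eval RatFunc.C f h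

namespace NSAux

open Polynomial

/-! ### Basic facts about nonconstant rational functions -/

lemma eq_C_of_num_denom {g : RatFunc K} {a b : K} (hn : g.num = Polynomial.C a)
    (hd : g.denom = Polynomial.C b) : g = RatFunc.C (a / b) := by
  have h := RatFunc.num_div_denom g
  rw [hn, hd, RatFunc.algebraMap_C, RatFunc.algebraMap_C] at h
  rw [← h, map_div₀]

lemma nonconst_exists_coeff {g : RatFunc K} (hg : ¬ ∃ c : K, g = RatFunc.C c) :
    ∃ j : ℕ, j ≠ 0 ∧ (g.num.coeff j ≠ 0 ∨ g.denom.coeff j ≠ 0) := by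
  by_contra hcon
  push_neg at hcon
  refine hg ⟨g.num.coeff 0 / g.denom.coeff 0, eq_C_of_num_denom ?_ ?_⟩
  · ext j
    rcases eq_or_ne j 0 with rfl | hj
    · simp
    · simp [Polynomial.coeff_C, hj, (hcon j hj).1]
  · ext j
    rcases eq_or_ne j 0 with rfl | hj
    · simp
    · simp [Polynomial.coeff_C, hj, (hcon j hj).2]

lemma X_nonconst : ¬ ∃ c : K, (RatFunc.X : RatFunc K) = RatFunc.C c := by
  rintro ⟨c, hc⟩
  have h := congrArg RatFunc.num hc
  rw [RatFunc.num_X, RatFunc.num_C] at h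
  exact Polynomial.X_ne_C c h

/-- A nonconstant rational function is transcendental over the constants. -/
lemma transcendental_of_nonconst {f : RatFunc K} (hf : ¬ ∃ c : K, f = RatFunc.C c) :
    Transcendental K f := by
  rw [transcendental_iff]
  intro p hp
  by_contra hp0
  have halg : IsAlgebraic K f := ⟨p, hp0, hp⟩
  have hint : IsIntegral (Polynomial K) f := halg.isIntegral.tower_top
  obtain ⟨u, hu⟩ := IsIntegrallyClosed.isIntegral_iff.mp hint
  apply hf
  have h2 : Polynomial.aeval u p = 0 := by
    apply IsFractionRing.injective (Polynomial K) (RatFunc K)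
    rw [map_zero, ← Polynomial.aeval_algebraMap_apply, hu, hp]
  have h3 : p.comp u = 0 := by
    show Polynomial.eval₂ Polynomial.C u p = 0
    rwa [Polynomial.aeval_def, Polynomial.algebraMap_eq] at h2
  rcases Polynomial.comp_eq_zero_iff.mp h3 with h | ⟨-, h⟩
  · exact absurd h hp0
  · refine ⟨u.coeff 0, ?_⟩
    conv_lhs => rw [← hu, h]
    exact RatFunc.algebraMap_C _

lemma aeval_injective_of_transcendental {A : Type*} [CommRing A] [Algebra K A] {x : A}
    (hx : Transcendental K x) : Function.Injective (Polynomial.aeval x : Polynomial K →ₐ[K] A) := by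
  intro a b hab
  have h : Polynomial.aeval x (a - b) = 0 := by
    rw [map_sub, hab, sub_self]
  exact sub_eq_zero.mp ((transcendental_iff.mp hx) _ h)

lemma aeval_ne_zero_of_transcendental {A : Type*} [CommRing A] [Algebra K A] {x : A}
    (hx : Transcendental K x) {p : Polynomial K} (hp : p ≠ 0) : Polynomial.aeval x p ≠ 0 :=
  fun h => hp (transcendental_iff.mp hx p h)

/-! ### The substitution homomorphism `ψ_f : K(t) → K(x)`, `t ↦ f` -/

def psi (f : RatFunc K) (tf : Transcendental K f) : RatFunc K →+* RatFunc K :=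
  IsFractionRing.lift (g := ((Polynomial.aeval f : Polynomial K →ₐ[K] RatFunc K) :
      Polynomial K →+* RatFunc K))
    (fun a b hab => aeval_injective_of_transcendental tf hab)

lemma psi_algebraMap (f : RatFunc K) (tf : Transcendental K f) (p : Polynomial K) :
    psi f tf (algebraMap (Polynomial K) (RatFunc K) p) = Polynomial.aeval f p :=
  IsFractionRing.lift_algebraMap _ _

lemma psi_C (f : RatFunc K) (tf : Transcendental K f) (a : K) :
    psi f tf (RatFunc.C a) = RatFunc.C a := by
  conv_lhs => rw [← RatFunc.algebraMap_C a]
  rw [psi_algebraMap, Polynomial.aeval_C, RatFunc.algebraMap_eq_C]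

lemma psi_X (f : RatFunc K) (tf : Transcendental K f) : psi f tf RatFunc.X = f := by
  rw [← RatFunc.algebraMap_X, psi_algebraMap, Polynomial.aeval_X]

lemma psi_apply (f : RatFunc K) (tf : Transcendental K f) (h : RatFunc K) :
    psi f tf h = Polynomial.aeval f h.num / Polynomial.aeval f h.denom := by
  conv_lhs => rw [← RatFunc.num_div_denom h]
  rw [map_div₀, psi_algebraMap, psi_algebraMap]

lemma eval₂_ratC (x : RatFunc K) (p : Polynomial K) :
    Polynomial.eval₂ RatFunc.C x p = Polynomial.aeval x p := by
  rw [Polynomial.aeval_def, RatFunc.algebraMap_eq_C]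

lemma comp_eq_psi {f : RatFunc K} (tf : Transcendental K f) (h : RatFunc K) :
    comp h f = psi f tf h := by
  show RatFunc.eval RatFunc.C f h = psi f tf h
  rw [RatFunc.eval, eval₂_ratC, eval₂_ratC, psi_apply]

/-- Extensionality for ring homomorphisms out of `RatFunc K`. -/
lemma ratfunc_hom_ext {L' : Type*} [Field L'] {φ χ : RatFunc K →+* L'}
    (hC : ∀ a : K, φ (RatFunc.C a) = χ (RatFunc.C a)) (hX : φ RatFunc.X = χ RatFunc.X) :
    φ = χ := by
  have h : φ.comp (algebraMap (Polynomial K) (RatFunc K)) =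
      χ.comp (algebraMap (Polynomial K) (RatFunc K)) := by
    apply Polynomial.ringHom_ext
    · intro a
      simpa [RatFunc.algebraMap_C] using hC a
    · simpa [RatFunc.algebraMap_X] using hX
  exact IsLocalization.ringHom_ext (nonZeroDivisors (Polynomial K)) h

/-! ### The `y`-polynomial `f·g_d(y) − g_n(y)` over `K(x)` -/

def NSyP (f : RatFunc K) (n d : Polynomial K) : Polynomial (RatFunc K) :=
  Polynomial.C f * d.map RatFunc.C - n.map RatFunc.C

def NSy (f g : RatFunc K) : Polynomial (RatFunc K) := NSyP f g.num g.denom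

lemma NSy_def (f g : RatFunc K) :
    NSy f g = Polynomial.C f * g.denom.map RatFunc.C - g.num.map RatFunc.C := rfl

lemma coeff_NSy (f g : RatFunc K) (j : ℕ) :
    (NSy f g).coeff j = f * RatFunc.C (g.denom.coeff j) - RatFunc.C (g.num.coeff j) := by
  simp [NSy, NSyP, Polynomial.coeff_map]

lemma one_le_degree_NSy {f g : RatFunc K} (hf : ¬ ∃ c : K, f = RatFunc.C c)
    (hg : ¬ ∃ c : K, g = RatFunc.C c) : 1 ≤ (NSy f g).degree := by
  obtain ⟨j, hj0, hj⟩ := nonconst_exists_coeff hg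
  have hc : (NSy f g).coeff j ≠ 0 := by
    rw [coeff_NSy]
    intro h
    rcases eq_or_ne (g.denom.coeff j) 0 with hd | hd
    · rw [hd, map_zero, mul_zero, zero_sub, neg_eq_zero] at h
      have hn : g.num.coeff j = 0 := by
        exact_mod_cast (_root_.map_eq_zero (RatFunc.C (K := K))).mp h
      rcases hj with h1 | h1
      · exact h1 hn
      · exact h1 hd
    · apply hf
      refine ⟨g.num.coeff j / g.denom.coeff j, ?_⟩
      have hCd : RatFunc.C (g.denom.coeff j) ≠ 0 := fun hh =>
        hd ((_root_.map_eq_zero (RatFunc.C (K := K))).mp hh)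
      rw [sub_eq_zero] at h
      rw [map_div₀, eq_div_iff hCd]
      exact h
  calc (1 : WithBot ℕ) ≤ (j : WithBot ℕ) := by
        exact_mod_cast Nat.one_le_iff_ne_zero.mpr hj0
    _ ≤ (NSy f g).degree := Polynomial.le_degree_of_ne_zero hc

lemma NSy_ne_zero {f g : RatFunc K} (hf : ¬ ∃ c : K, f = RatFunc.C c)
    (hg : ¬ ∃ c : K, g = RatFunc.C c) : NSy f g ≠ 0 := by
  intro h
  have h1 := one_le_degree_NSy hf hg
  rw [h, Polynomial.degree_zero] at h1
  simp at h1

lemma degree_NSy_ne_zero {f g : RatFunc K} (hf : ¬ ∃ c : K, f = RatFunc.C c)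
    (hg : ¬ ∃ c : K, g = RatFunc.C c) : (NSy f g).degree ≠ 0 := by
  intro h
  have h1 := one_le_degree_NSy hf hg
  rw [h] at h1
  exact absurd h1 (by decide)

/-! ### Evaluation in the algebraic closure -/

local notation "L" => AlgebraicClosure (RatFunc K)

lemma algebraMap_KL :
    algebraMap K L = (algebraMap (RatFunc K) L).comp (RatFunc.C (K := K)) := by
  rw [IsScalarTower.algebraMap_eq K (RatFunc K) L, RatFunc.algebraMap_eq_C]

lemma eval_map_ratC (p : Polynomial K) (y : L) :
    ((p.map (RatFunc.C (K := K))).map (algebraMap (RatFunc K) L)).eval y =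
      Polynomial.aeval y p := by
  rw [Polynomial.map_map, ← algebraMap_KL, Polynomial.eval_map, ← Polynomial.aeval_def]

lemma eval_map_NSyP (f : RatFunc K) (n d : Polynomial K) (y : L) :
    ((NSyP f n d).map (algebraMap (RatFunc K) L)).eval y =
      algebraMap (RatFunc K) L f * Polynomial.aeval y d - Polynomial.aeval y n := by
  rw [NSyP, Polynomial.map_sub, Polynomial.map_mul, Polynomial.map_C, Polynomial.eval_sub,
    Polynomial.eval_mul, Polynomial.eval_C, eval_map_ratC, eval_map_ratC]

lemma isRoot_map_NSy_iff {f g : RatFunc K} {y : L} :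
    ((NSy f g).map (algebraMap (RatFunc K) L)).IsRoot y ↔
      algebraMap (RatFunc K) L f * Polynomial.aeval y g.denom = Polynomial.aeval y g.num := by
  rw [Polynomial.IsRoot, NSy, eval_map_NSyP, sub_eq_zero]

lemma transcendental_iota {f : RatFunc K} (hf : ¬ ∃ c : K, f = RatFunc.C c) :
    Transcendental K (algebraMap (RatFunc K) L f) := by
  intro halg
  have hinj : Function.Injective (IsScalarTower.toAlgHom K (RatFunc K) L) :=
    (algebraMap (RatFunc K) L).injective
  exact transcendental_of_nonconst hf
    ((isAlgebraic_algHom_iff (IsScalarTower.toAlgHom K (RatFunc K) L) hinj).mp halg)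

lemma root_facts {f g : RatFunc K} (hf : ¬ ∃ c : K, f = RatFunc.C c)
    (hg : ¬ ∃ c : K, g = RatFunc.C c) {y : L}
    (e0 : algebraMap (RatFunc K) L f * Polynomial.aeval y g.denom = Polynomial.aeval y g.num) :
    Polynomial.aeval y g.denom ≠ 0 ∧ Transcendental K y := by
  have hd0 : Polynomial.aeval y g.denom ≠ 0 := by
    intro hd
    have hn : Polynomial.aeval y g.num = 0 := by rw [← e0, hd, mul_zero]
    obtain ⟨a, b, hab⟩ := RatFunc.isCoprime_num_denom g
    have h1 := congrArg (Polynomial.aeval y) hab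
    rw [map_add, map_mul, map_mul, hn, hd, mul_zero, mul_zero, add_zero, map_one] at h1
    exact one_ne_zero h1.symm
  refine ⟨hd0, ?_⟩
  intro halg
  have hint : IsIntegral K y := halg.isIntegral
  have hadj : Algebra.adjoin K ({y} : Set L) ≤ integralClosure K L :=
    Algebra.adjoin_le (Set.singleton_subset_iff.mpr hint)
  have h1 : IsIntegral K (Polynomial.aeval y g.num) :=
    hadj (Polynomial.aeval_mem_adjoin_singleton K y)
  have h2 : IsIntegral K (Polynomial.aeval y g.denom) :=
    hadj (Polynomial.aeval_mem_adjoin_singleton K y)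
  have hfi : IsIntegral K (algebraMap (RatFunc K) L f) := by
    have heq : algebraMap (RatFunc K) L f =
        Polynomial.aeval y g.num * (Polynomial.aeval y g.denom)⁻¹ := by
      rw [eq_mul_inv_iff_mul_eq₀ hd0]; exact e0
    rw [heq]
    exact h1.mul h2.inv
  exact transcendental_iota hf hfi.isAlgebraic

/-! ### The Wronskian and separability of `NSy` -/

lemma wronskian_ne_zero [CharZero K] {g : RatFunc K} (hg : ¬ ∃ c : K, g = RatFunc.C c) :
    Polynomial.derivative g.num * g.denom - g.num * Polynomial.derivative g.denom ≠ 0 := by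
  intro h
  have heq : Polynomial.derivative g.num * g.denom = g.num * Polynomial.derivative g.denom :=
    sub_eq_zero.mp h
  have hdd : g.denom ∣ g.num * Polynomial.derivative g.denom :=
    ⟨Polynomial.derivative g.num, by rw [← heq]; ring⟩
  have hd : g.denom ∣ Polynomial.derivative g.denom :=
    ((RatFunc.isCoprime_num_denom g).symm).dvd_of_dvd_mul_left hdd
  have hd0 : Polynomial.derivative g.denom = 0 := by
    by_contra hne
    exact hne (Polynomial.eq_zero_of_dvd_of_degree_lt hd
      (Polynomial.degree_derivative_lt (RatFunc.denom_ne_zero g)))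
  have hdc : g.denom = Polynomial.C (g.denom.coeff 0) :=
    Polynomial.eq_C_of_natDegree_eq_zero (Polynomial.natDegree_eq_zero_of_derivative_eq_zero hd0)
  have hn0 : Polynomial.derivative g.num = 0 := by
    have h2 : Polynomial.derivative g.num * g.denom = 0 := by rw [heq, hd0, mul_zero]
    exact (mul_eq_zero.mp h2).resolve_right (RatFunc.denom_ne_zero g)
  have hnc : g.num = Polynomial.C (g.num.coeff 0) :=
    Polynomial.eq_C_of_natDegree_eq_zero (Polynomial.natDegree_eq_zero_of_derivative_eq_zero hn0)
  exact hg ⟨_, eq_C_of_num_denom hnc hdc⟩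

lemma derivative_NSy (f g : RatFunc K) :
    Polynomial.derivative (NSy f g) =
      NSyP f (Polynomial.derivative g.num) (Polynomial.derivative g.denom) := by
  rw [NSy, NSyP, NSyP, derivative_sub, Polynomial.derivative_map, derivative_C_mul,
    Polynomial.derivative_map]

lemma nodup_roots_NSy [CharZero K] {f g : RatFunc K} (hf : ¬ ∃ c : K, f = RatFunc.C c)
    (hg : ¬ ∃ c : K, g = RatFunc.C c) :
    ((NSy f g).map (algebraMap (RatFunc K) L)).roots.Nodup := by
  classical
  have hP0 : (NSy f g).map (algebraMap (RatFunc K) L) ≠ 0 := by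
    rw [Ne, Polynomial.map_eq_zero_iff (algebraMap (RatFunc K) L).injective]
    exact NSy_ne_zero hf hg
  rw [Multiset.nodup_iff_count_le_one]
  intro y
  rw [Polynomial.count_roots]
  by_contra hlt
  push_neg at hlt
  obtain ⟨h0, h1⟩ := (Polynomial.one_lt_rootMultiplicity_iff_isRoot hP0).mp hlt
  have e0 : algebraMap (RatFunc K) L f * Polynomial.aeval y g.denom = Polynomial.aeval y g.num :=
    isRoot_map_NSy_iff.mp h0
  obtain ⟨hd0, hyT⟩ := root_facts hf hg e0
  have e1 : algebraMap (RatFunc K) L f * Polynomial.aeval y (Polynomial.derivative g.denom) =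
      Polynomial.aeval y (Polynomial.derivative g.num) := by
    have h2 : (Polynomial.derivative ((NSy f g).map (algebraMap (RatFunc K) L))).eval y = 0 := h1
    rw [Polynomial.derivative_map, derivative_NSy, eval_map_NSyP, sub_eq_zero] at h2
    exact h2
  have hW : Polynomial.aeval y
      (Polynomial.derivative g.num * g.denom - g.num * Polynomial.derivative g.denom) = 0 := by
    rw [map_sub, map_mul, map_mul, ← e0, ← e1]
    ring
  exact aeval_ne_zero_of_transcendental hyT (wronskian_ne_zero hg) hW

/-! ### `NSy` under the substitution `ψ_f` -/

lemma psi_comp_C (f : RatFunc K) (tf : Transcendental K f) :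
    (psi f tf).comp (RatFunc.C (K := K)) = RatFunc.C (K := K) :=
  RingHom.ext fun a => psi_C f tf a

lemma map_psi_map_C (f : RatFunc K) (tf : Transcendental K f) (p : Polynomial K) :
    (p.map (RatFunc.C (K := K))).map (psi f tf) = p.map (RatFunc.C (K := K)) := by
  rw [Polynomial.map_map, psi_comp_C]

lemma map_psi_NSy (f g : RatFunc K) (tf : Transcendental K f) :
    (NSy RatFunc.X g).map (psi f tf) = NSy f g := by
  rw [NSy_def, NSy_def, Polynomial.map_sub, Polynomial.map_mul, Polynomial.map_C,
    map_psi_map_C, map_psi_map_C, psi_X f tf]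

/-! ### The comparison homomorphism `Θ : K(x) → L`, `x ↦ y` -/

lemma theta_exists {f g : RatFunc K} (hf : ¬ ∃ c : K, f = RatFunc.C c)
    (hg : ¬ ∃ c : K, g = RatFunc.C c) {y : L}
    (e0 : algebraMap (RatFunc K) L f * Polynomial.aeval y g.denom = Polynomial.aeval y g.num)
    (hd0 : Polynomial.aeval y g.denom ≠ 0) (hyT : Transcendental K y) :
    ∃ Θ : RatFunc K →+* L, Function.Injective Θ ∧
      (∀ p : Polynomial K, Θ (algebraMap (Polynomial K) (RatFunc K) p) = Polynomial.aeval y p) ∧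
      ∀ u : RatFunc K, Θ (psi g (transcendental_of_nonconst hg) u) =
        algebraMap (RatFunc K) L (psi f (transcendental_of_nonconst hf) u) := by
  set tg := transcendental_of_nonconst hg
  set tf := transcendental_of_nonconst hf
  set Θ : RatFunc K →+* L :=
    IsFractionRing.lift (g := ((Polynomial.aeval y : Polynomial K →ₐ[K] L) :
        Polynomial K →+* L))
      (fun a b hab => aeval_injective_of_transcendental hyT hab) with hΘdef
  have halg : ∀ p : Polynomial K,
      Θ (algebraMap (Polynomial K) (RatFunc K) p) = Polynomial.aeval y p := fun p =>
    IsFractionRing.lift_algebraMap _ _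
  have hΘC : ∀ a : K, Θ (RatFunc.C a) = algebraMap K L a := by
    intro a
    conv_lhs => rw [← RatFunc.algebraMap_C a]
    rw [halg, Polynomial.aeval_C]
  have hΘg : Θ g = algebraMap (RatFunc K) L f := by
    conv_lhs => rw [← RatFunc.num_div_denom g]
    rw [map_div₀, halg, halg, div_eq_iff hd0]
    exact e0.symm
  refine ⟨Θ, Θ.injective, halg, ?_⟩
  intro u
  have hhom : Θ.comp (psi g tg) = (algebraMap (RatFunc K) L).comp (psi f tf) := by
    apply ratfunc_hom_ext
    · intro a
      have h1 : Θ ((psi g tg) (RatFunc.C a)) = algebraMap K L a := by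
        rw [psi_C, hΘC]
      have h2 : algebraMap (RatFunc K) L ((psi f tf) (RatFunc.C a)) = algebraMap K L a := by
        rw [psi_C, ← RingHom.comp_apply, ← algebraMap_KL]
      simpa using h1.trans h2.symm
    · have h1 : Θ ((psi g tg) RatFunc.X) = algebraMap (RatFunc K) L f := by
        rw [psi_X, hΘg]
      have h2 : algebraMap (RatFunc K) L ((psi f tf) RatFunc.X) =
          algebraMap (RatFunc K) L f := by rw [psi_X]
      simpa using h1.trans h2.symm
  exact RingHom.congr_fun hhom u

/-! ### Forward direction: extraction of `h` -/

lemma forward [CharZero K] {f g F G : RatFunc K}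
    (hf : ¬ ∃ c : K, f = RatFunc.C c) (hg : ¬ ∃ c : K, g = RatFunc.C c)
    (hdvd : NSy f g ∣ NSy F G) :
    ∃ h : RatFunc K, psi f (transcendental_of_nonconst hf) h = F ∧
      psi g (transcendental_of_nonconst hg) h = G := by
  classical
  set tf := transcendental_of_nonconst hf
  set tg := transcendental_of_nonconst hg
  set ψ : RatFunc K →+* RatFunc K := psi f tf with hψdef
  set NSy0 : Polynomial (RatFunc K) := NSy RatFunc.X g with hNSy0
  have h00 : NSy0 ≠ 0 := NSy_ne_zero X_nonconst hg
  set lc0 : RatFunc K := NSy0.leadingCoeff with hlc0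
  have hlc0ne : lc0 ≠ 0 := Polynomial.leadingCoeff_ne_zero.mpr h00
  set Q0 : Polynomial (RatFunc K) := NSy0 * Polynomial.C lc0⁻¹ with hQ0
  have hQ0m : Q0.Monic := Polynomial.monic_mul_leadingCoeff_inv h00
  have hN0Q0 : NSy0 ∣ Q0 := ⟨Polynomial.C lc0⁻¹, rfl⟩
  set r0 : Polynomial (RatFunc K) := (G.num.map (RatFunc.C (K := K))) %ₘ Q0 with hr0
  set r1 : Polynomial (RatFunc K) := (G.denom.map (RatFunc.C (K := K))) %ₘ Q0 with hr1
  -- the image of `Q0` under `ψ` divides `NSy F G`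
  have hmapNSy : NSy0.map ψ = NSy f g := map_psi_NSy f g tf
  have hQfm : (Q0.map ψ).Monic := hQ0m.map ψ
  have hψlc : ψ lc0 ≠ 0 := fun hh => hlc0ne (ψ.injective (by rw [hh, map_zero]))
  have hQψ : Q0.map ψ = NSy f g * Polynomial.C ((ψ lc0)⁻¹) := by
    rw [hQ0, Polynomial.map_mul, hmapNSy, Polynomial.map_C, map_inv₀]
  have hQfdvd : Q0.map ψ ∣ NSy F G := by
    obtain ⟨c, hc⟩ := hdvd
    refine ⟨Polynomial.C (ψ lc0) * c, ?_⟩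
    rw [hc, hQψ]
    have hone : Polynomial.C ((ψ lc0)⁻¹) * Polynomial.C (ψ lc0) = 1 := by
      rw [← Polynomial.C_mul, inv_mul_cancel₀ hψlc, Polynomial.C_1]
    calc NSy f g * c
        = NSy f g * (Polynomial.C ((ψ lc0)⁻¹) * Polynomial.C (ψ lc0)) * c := by
          rw [hone, mul_one]
      _ = NSy f g * Polynomial.C ((ψ lc0)⁻¹) * (Polynomial.C (ψ lc0) * c) := by ring
  -- the remainder relation
  have hmod : Polynomial.C F * r1.map ψ - r0.map ψ = 0 := by
    have h2 := (Polynomial.modByMonic_eq_zero_iff_dvd hQfm).mpr hQfdvd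
    rw [NSy_def, sub_modByMonic, ← Polynomial.smul_eq_C_mul, smul_modByMonic,
      Polynomial.smul_eq_C_mul] at h2
    rw [hr0, hr1, Polynomial.map_modByMonic ψ hQ0m, Polynomial.map_modByMonic ψ hQ0m,
      map_psi_map_C, map_psi_map_C]
    exact h2
  -- r1 is nonzero
  have hroot0 : ∃ y : L, ((NSy0).map (algebraMap (RatFunc K) L)).IsRoot y := by
    apply IsAlgClosed.exists_root
    rw [Polynomial.degree_map]
    exact degree_NSy_ne_zero X_nonconst hg
  have hr1ne : r1 ≠ 0 := by
    intro hzero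
    have hdvd1 : Q0 ∣ G.denom.map (RatFunc.C (K := K)) :=
      (Polynomial.modByMonic_eq_zero_iff_dvd hQ0m).mp hzero
    have hdvd2 : NSy0 ∣ G.denom.map (RatFunc.C (K := K)) := hN0Q0.trans hdvd1
    obtain ⟨y, hy⟩ := hroot0
    have e0 := isRoot_map_NSy_iff.mp hy
    obtain ⟨-, hyT⟩ := root_facts X_nonconst hg e0
    have hy2 : ((G.denom.map (RatFunc.C (K := K))).map (algebraMap (RatFunc K) L)).IsRoot y :=
      Polynomial.IsRoot.dvd hy (Polynomial.map_dvd _ hdvd2)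
    rw [Polynomial.IsRoot, eval_map_ratC] at hy2
    exact aeval_ne_zero_of_transcendental hyT (RatFunc.denom_ne_zero G) hy2
  obtain ⟨j, hj⟩ : ∃ j, r1.coeff j ≠ 0 := by
    by_contra hc
    push_neg at hc
    exact hr1ne (Polynomial.ext fun n => by simp [hc n])
  have hψr1j : ψ (r1.coeff j) ≠ 0 := fun hh => hj (ψ.injective (by rw [hh, map_zero]))
  -- the candidate h
  have hψhF : ψ (r0.coeff j / r1.coeff j) = F := by
    have hcoeff := congrArg (fun p => Polynomial.coeff p j) hmod
    simp only [Polynomial.coeff_sub, Polynomial.coeff_C_mul, Polynomial.coeff_map,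
      Polynomial.coeff_zero] at hcoeff
    rw [sub_eq_zero] at hcoeff
    rw [map_div₀, eq_comm, eq_div_iff hψr1j]
    linear_combination hcoeff
  refine ⟨r0.coeff j / r1.coeff j, hψhF, ?_⟩
  ·
    obtain ⟨y, hy⟩ : ∃ y : L, ((NSy f g).map (algebraMap (RatFunc K) L)).IsRoot y := by
      apply IsAlgClosed.exists_root
      rw [Polynomial.degree_map]
      exact degree_NSy_ne_zero hf hg
    have e0 := isRoot_map_NSy_iff.mp hy
    obtain ⟨hd0, hyT⟩ := root_facts hf hg e0
    obtain ⟨Θ, hΘinj, hΘalg, hΘpsi⟩ := theta_exists hf hg e0 hd0 hyT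
    -- y is a root of NSy F G
    have hy2 : ((NSy F G).map (algebraMap (RatFunc K) L)).IsRoot y :=
      Polynomial.IsRoot.dvd hy (Polynomial.map_dvd _ hdvd)
    have e1 := isRoot_map_NSy_iff.mp hy2
    have hGd0 : Polynomial.aeval y G.denom ≠ 0 :=
      aeval_ne_zero_of_transcendental hyT (RatFunc.denom_ne_zero G)
    have hΘG : Θ G = algebraMap (RatFunc K) L F := by
      conv_lhs => rw [← RatFunc.num_div_denom G]
      rw [map_div₀, hΘalg, hΘalg, eq_comm, eq_div_iff hGd0]
      exact e1.symm ▸ rfl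
    apply hΘinj
    rw [hΘG, hΘpsi, hψhF]

/-! ### Backward direction on the `y`-level -/

lemma isRoot_NSy_FG [CharZero K] {f g F G h : RatFunc K}
    (hf : ¬ ∃ c : K, f = RatFunc.C c) (hg : ¬ ∃ c : K, g = RatFunc.C c)
    (hFeq : psi f (transcendental_of_nonconst hf) h = F)
    (hGeq : psi g (transcendental_of_nonconst hg) h = G)
    {y : L} (hy : ((NSy f g).map (algebraMap (RatFunc K) L)).IsRoot y) :
    ((NSy F G).map (algebraMap (RatFunc K) L)).IsRoot y := by
  have e0 := isRoot_map_NSy_iff.mp hy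
  obtain ⟨hd0, hyT⟩ := root_facts hf hg e0
  obtain ⟨Θ, hΘinj, hΘalg, hΘpsi⟩ := theta_exists hf hg e0 hd0 hyT
  have hΘG : Θ G = algebraMap (RatFunc K) L F := by
    rw [← hFeq, ← hGeq, hΘpsi]
  have hGd0 : Polynomial.aeval y G.denom ≠ 0 :=
    aeval_ne_zero_of_transcendental hyT (RatFunc.denom_ne_zero G)
  rw [isRoot_map_NSy_iff]
  have hGval : Θ G = Polynomial.aeval y G.num / Polynomial.aeval y G.denom := by
    conv_lhs => rw [← RatFunc.num_div_denom G]
    rw [map_div₀, hΘalg, hΘalg]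
  rw [← hΘG, hGval, div_mul_cancel₀ _ hGd0]

lemma NSy_dvd_backward [CharZero K] {f g F G h : RatFunc K}
    (hf : ¬ ∃ c : K, f = RatFunc.C c) (hF : ¬ ∃ c : K, F = RatFunc.C c)
    (hg : ¬ ∃ c : K, g = RatFunc.C c) (hG : ¬ ∃ c : K, G = RatFunc.C c)
    (hFeq : psi f (transcendental_of_nonconst hf) h = F)
    (hGeq : psi g (transcendental_of_nonconst hg) h = G) :
    NSy f g ∣ NSy F G := by
  classical
  rw [← Polynomial.map_dvd_map' (algebraMap (RatFunc K) L)]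
  set P := (NSy f g).map (algebraMap (RatFunc K) L) with hPdef
  set Q := (NSy F G).map (algebraMap (RatFunc K) L) with hQdef
  have hP0 : P ≠ 0 := by
    rw [hPdef, Ne, Polynomial.map_eq_zero_iff (algebraMap (RatFunc K) L).injective]
    exact NSy_ne_zero hf hg
  have hQ0 : Q ≠ 0 := by
    rw [hQdef, Ne, Polynomial.map_eq_zero_iff (algebraMap (RatFunc K) L).injective]
    exact NSy_ne_zero hF hG
  have hnodup : P.roots.Nodup := nodup_roots_NSy hf hg
  have hle : P.roots ≤ Q.roots := by
    rw [Multiset.le_iff_count]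
    intro a
    by_cases ha : a ∈ P.roots
    · have h1 : Multiset.count a P.roots ≤ 1 := Multiset.nodup_iff_count_le_one.mp hnodup a
      have hroot : Q.IsRoot a :=
        isRoot_NSy_FG hf hg hFeq hGeq ((Polynomial.mem_roots hP0).mp ha)
      have h2 : 1 ≤ Multiset.count a Q.roots := by
        rw [Multiset.one_le_count_iff_mem]
        exact (Polynomial.mem_roots hQ0).mpr hroot
      omega
    · rw [Multiset.count_eq_zero_of_notMem ha]
      exact Nat.zero_le _
  set u := P.leadingCoeff with hu
  have hsplit : P = Polynomial.C u *
      (P.roots.map fun a => Polynomial.X - Polynomial.C a).prod :=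
    (IsAlgClosed.splits P).eq_prod_roots
  have h3 : (P.roots.map fun a => Polynomial.X - Polynomial.C a).prod ∣
      (Q.roots.map fun a => Polynomial.X - Polynomial.C a).prod :=
    Multiset.prod_dvd_prod_of_le (Multiset.map_le_map hle)
  have h4 : (Q.roots.map fun a => Polynomial.X - Polynomial.C a).prod ∣ Q :=
    Polynomial.prod_multiset_X_sub_C_dvd Q
  obtain ⟨c, hc⟩ := h3.trans h4
  have hlc : u ≠ 0 := Polynomial.leadingCoeff_ne_zero.mpr hP0
  have hone : Polynomial.C u * Polynomial.C u⁻¹ = 1 := by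
    rw [← Polynomial.C_mul, mul_inv_cancel₀ hlc, Polynomial.C_1]
  refine ⟨Polynomial.C u⁻¹ * c, ?_⟩
  rw [hc]
  conv_rhs => rw [hsplit]
  rw [mul_mul_mul_comm, hone, one_mul]

/-! ### The isomorphism `K[x,y] ≅ (K[x])[y]` -/

def Phi : P2 K →ₐ[K] Polynomial (Polynomial K) :=
  MvPolynomial.aeval ![Polynomial.C Polynomial.X, Polynomial.X]

def PsiR : Polynomial (Polynomial K) →+* P2 K :=
  Polynomial.eval₂RingHom
    ((Polynomial.aeval (X 0 : P2 K) : Polynomial K →ₐ[K] P2 K) : Polynomial K →+* P2 K)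
    (X 1)

lemma Phi_C (r : K) : Phi (MvPolynomial.C r : P2 K) = Polynomial.C (Polynomial.C r) := by
  have h0 : (MvPolynomial.C r : P2 K) = algebraMap K (P2 K) r := rfl
  rw [h0, AlgHom.commutes,
    IsScalarTower.algebraMap_apply K (Polynomial K) (Polynomial (Polynomial K)) r,
    Polynomial.algebraMap_eq, Polynomial.algebraMap_eq]

lemma Phi_X0 : Phi (X 0 : P2 K) = Polynomial.C Polynomial.X := by
  have h := MvPolynomial.aeval_X (R := K)
    (f := (![Polynomial.C Polynomial.X, Polynomial.X] : Fin 2 → Polynomial (Polynomial K))) 0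
  rw [Matrix.cons_val_zero] at h
  exact h

lemma Phi_X1 : Phi (X 1 : P2 K) = Polynomial.X := by
  have h := MvPolynomial.aeval_X (R := K)
    (f := (![Polynomial.C Polynomial.X, Polynomial.X] : Fin 2 → Polynomial (Polynomial K))) 1
  rw [Matrix.cons_val_one, Matrix.cons_val_zero] at h
  exact h

lemma PsiR_C (p : Polynomial K) : PsiR (Polynomial.C p) = Polynomial.aeval (X 0 : P2 K) p := by
  show Polynomial.eval₂ _ _ (Polynomial.C p) = _
  rw [Polynomial.eval₂_C]
  rfl

lemma PsiR_X : PsiR (Polynomial.X : Polynomial (Polynomial K)) = (X 1 : P2 K) := by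
  show Polynomial.eval₂ _ _ Polynomial.X = _
  rw [Polynomial.eval₂_X]

lemma PsiR_Phi (a : P2 K) : PsiR (Phi a) = a := by
  have h : (PsiR : Polynomial (Polynomial K) →+* P2 K).comp
      (Phi : P2 K →ₐ[K] Polynomial (Polynomial K)).toRingHom = RingHom.id (P2 K) := by
    apply MvPolynomial.ringHom_ext
    · intro r
      show PsiR (Phi (MvPolynomial.C r : P2 K)) = MvPolynomial.C r
      rw [Phi_C, PsiR_C, Polynomial.aeval_C, MvPolynomial.algebraMap_eq]
    · intro i
      fin_cases i
      · show PsiR (Phi (X 0 : P2 K)) = X 0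
        rw [Phi_X0, PsiR_C, Polynomial.aeval_X]
      · show PsiR (Phi (X 1 : P2 K)) = X 1
        rw [Phi_X1, PsiR_X]
  exact RingHom.congr_fun h a

lemma dvd_iff_Phi {a b : P2 K} : a ∣ b ↔ Phi a ∣ Phi b := by
  constructor
  · exact fun h => by obtain ⟨c, rfl⟩ := h; exact ⟨Phi c, map_mul _ _ _⟩
  · rintro ⟨c, hc⟩
    refine ⟨PsiR c, ?_⟩
    have h := congrArg PsiR hc
    rwa [map_mul, PsiR_Phi, PsiR_Phi] at h

lemma aeval_CX {A : Type*} [CommRing A] [Algebra K A] (x : A) (u : Polynomial K) :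
    Polynomial.aeval (Polynomial.C x : Polynomial A) u = Polynomial.C (Polynomial.aeval x u) := by
  induction u using Polynomial.induction_on' with
  | add p q hp hq => rw [map_add, hp, hq, map_add, map_add]
  | monomial n a =>
      rw [Polynomial.aeval_monomial, Polynomial.aeval_monomial, Polynomial.algebraMap_apply,
        ← Polynomial.C_pow, ← map_mul]

lemma aeval_XY {A : Type*} [CommRing A] [Algebra K A] (u : Polynomial K) :
    Polynomial.aeval (Polynomial.X : Polynomial A) u = u.map (algebraMap K A) := by
  induction u using Polynomial.induction_on' with
  | add p q hp hq => rw [map_add, hp, hq, Polynomial.map_add]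
  | monomial n a =>
      rw [Polynomial.aeval_monomial, Polynomial.map_monomial,
        ← Polynomial.C_mul_X_pow_eq_monomial, Polynomial.algebraMap_apply]

lemma Phi_toX (u : Polynomial K) : Phi (toX u) = Polynomial.C u := by
  rw [toX, ← Polynomial.aeval_algHom_apply]
  have h0 : Phi (X 0 : P2 K) = Polynomial.C Polynomial.X := by simp [Phi]
  rw [h0, aeval_CX]
  congr 1
  exact Polynomial.aeval_X_left_apply u

lemma Phi_toY (u : Polynomial K) : Phi (toY u) = u.map (algebraMap K (Polynomial K)) := by
  rw [toY, ← Polynomial.aeval_algHom_apply]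
  have h1 : Phi (X 1 : P2 K) = Polynomial.X := by simp [Phi]
  rw [h1, aeval_XY]

def NSP (f g : RatFunc K) : Polynomial (Polynomial K) :=
  Polynomial.C f.num * g.denom.map (algebraMap K (Polynomial K)) -
    g.num.map (algebraMap K (Polynomial K)) * Polynomial.C f.denom

lemma Phi_NS (f g : RatFunc K) : Phi (NS f g) = NSP f g := by
  rw [NS, map_sub, map_mul, map_mul, Phi_toX, Phi_toY, Phi_toX, Phi_toY, NSP]

lemma algebraMap_num_eq (f : RatFunc K) :
    algebraMap (Polynomial K) (RatFunc K) f.num =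
      f * algebraMap (Polynomial K) (RatFunc K) f.denom := by
  have hd : algebraMap (Polynomial K) (RatFunc K) f.denom ≠ 0 :=
    RatFunc.algebraMap_ne_zero (RatFunc.denom_ne_zero f)
  have h2 : algebraMap (Polynomial K) (RatFunc K) f.num /
      algebraMap (Polynomial K) (RatFunc K) f.denom *
      algebraMap (Polynomial K) (RatFunc K) f.denom =
      algebraMap (Polynomial K) (RatFunc K) f.num :=
    div_mul_cancel₀ _ hd
  rw [RatFunc.num_div_denom f] at h2
  exact h2.symm

lemma map_NSP (f g : RatFunc K) :
    (NSP f g).map (algebraMap (Polynomial K) (RatFunc K)) =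
      Polynomial.C (algebraMap (Polynomial K) (RatFunc K) f.denom) * NSy f g := by
  have hcomp : (algebraMap (Polynomial K) (RatFunc K)).comp (algebraMap K (Polynomial K)) =
      RatFunc.C (K := K) := by
    refine RingHom.ext fun a => ?_
    rw [RingHom.comp_apply, Polynomial.algebraMap_eq]
    exact RatFunc.algebraMap_C a
  rw [NSP, Polynomial.map_sub, Polynomial.map_mul, Polynomial.map_mul, Polynomial.map_C,
    Polynomial.map_C, Polynomial.map_map, Polynomial.map_map, hcomp, algebraMap_num_eq,
    NSy_def, map_mul]
  ring

/-! ### Primitivity of `NSP` -/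

lemma exists_minor {g : RatFunc K} (hg : ¬ ∃ c : K, g = RatFunc.C c) :
    ∃ j k : ℕ, g.num.coeff j * g.denom.coeff k - g.num.coeff k * g.denom.coeff j ≠ 0 := by
  by_contra hcon
  push_neg at hcon
  obtain ⟨k, hk⟩ : ∃ k, g.denom.coeff k ≠ 0 := by
    by_contra hc
    push_neg at hc
    exact RatFunc.denom_ne_zero g (Polynomial.ext fun n => by simp [hc n])
  apply hg
  refine ⟨g.num.coeff k / g.denom.coeff k, ?_⟩
  have hnum : g.num = Polynomial.C (g.num.coeff k / g.denom.coeff k) * g.denom := by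
    ext j
    rw [Polynomial.coeff_C_mul]
    have h1 := hcon j k
    rw [sub_eq_zero] at h1
    field_simp
    linear_combination h1
  have hd : algebraMap (Polynomial K) (RatFunc K) g.denom ≠ 0 :=
    RatFunc.algebraMap_ne_zero (RatFunc.denom_ne_zero g)
  conv_lhs => rw [← RatFunc.num_div_denom g, hnum]
  rw [map_mul, RatFunc.algebraMap_C, mul_div_assoc, div_self hd, mul_one]

lemma coeff_NSP (f g : RatFunc K) (i : ℕ) :
    (NSP f g).coeff i =
      Polynomial.C (g.denom.coeff i) * f.num - Polynomial.C (g.num.coeff i) * f.denom := by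
  rw [NSP, Polynomial.coeff_sub, Polynomial.coeff_C_mul, Polynomial.coeff_mul_C,
    Polynomial.coeff_map, Polynomial.coeff_map, Polynomial.algebraMap_eq]
  ring

lemma dvd_of_dvd_C_mul {R : Type*} [Field R] {m : R} (hm : m ≠ 0) {d p : Polynomial R}
    (h : d ∣ Polynomial.C m * p) : d ∣ p := by
  obtain ⟨e, he⟩ := h
  refine ⟨Polynomial.C m⁻¹ * e, ?_⟩
  calc p = Polynomial.C m⁻¹ * (Polynomial.C m * p) := by
        rw [← mul_assoc, ← Polynomial.C_mul, inv_mul_cancel₀ hm, Polynomial.C_1, one_mul]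
    _ = Polynomial.C m⁻¹ * (d * e) := by rw [he]
    _ = d * (Polynomial.C m⁻¹ * e) := by ring

lemma NSP_primitive {f g : RatFunc K} (hf : ¬ ∃ c : K, f = RatFunc.C c)
    (hg : ¬ ∃ c : K, g = RatFunc.C c) : (NSP f g).IsPrimitive := by
  rw [Polynomial.isPrimitive_iff_isUnit_of_C_dvd]
  intro d hd
  rw [Polynomial.C_dvd_iff_dvd_coeff] at hd
  obtain ⟨j, k, hjk⟩ := exists_minor hg
  have hdj := hd j
  have hdk := hd k
  rw [coeff_NSP] at hdj hdk
  have hm : g.num.coeff k * g.denom.coeff j - g.num.coeff j * g.denom.coeff k ≠ 0 := by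
    intro h0
    apply hjk
    linear_combination -h0
  have h1 : d ∣ Polynomial.C (g.num.coeff k * g.denom.coeff j -
      g.num.coeff j * g.denom.coeff k) * f.num := by
    have h := dvd_sub (hdj.mul_left (Polynomial.C (g.num.coeff k)))
      (hdk.mul_left (Polynomial.C (g.num.coeff j)))
    convert h using 1
    simp only [map_sub, map_mul]
    ring
  have h2 : d ∣ Polynomial.C (g.num.coeff k * g.denom.coeff j -
      g.num.coeff j * g.denom.coeff k) * f.denom := by
    have h := dvd_sub (hdj.mul_left (Polynomial.C (g.denom.coeff k)))
      (hdk.mul_left (Polynomial.C (g.denom.coeff j)))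
    convert h using 1
    simp only [map_sub, map_mul]
    ring
  exact (RatFunc.isCoprime_num_denom f).isUnit_of_dvd' (dvd_of_dvd_C_mul hm h1)
    (dvd_of_dvd_C_mul hm h2)

/-! ### Transfer of divisibility between `K[x,y]` and `K(x)[y]` -/

lemma NSy_dvd_of_NS_dvd {f g F G : RatFunc K} (hdvd : NS f g ∣ NS F G) :
    NSy f g ∣ NSy F G := by
  have h0 : Phi (NS f g) ∣ Phi (NS F G) := by
    obtain ⟨c, hc⟩ := hdvd; exact ⟨Phi c, by rw [hc, map_mul]⟩
  rw [Phi_NS, Phi_NS] at h0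
  have h1 : (NSP f g).map (algebraMap (Polynomial K) (RatFunc K)) ∣
      (NSP F G).map (algebraMap (Polynomial K) (RatFunc K)) := by
    obtain ⟨c, hc⟩ := h0
    exact ⟨c.map _, by rw [hc, Polynomial.map_mul]⟩
  rw [map_NSP, map_NSP] at h1
  have hfd : algebraMap (Polynomial K) (RatFunc K) f.denom ≠ 0 :=
    RatFunc.algebraMap_ne_zero (RatFunc.denom_ne_zero f)
  have hFd : algebraMap (Polynomial K) (RatFunc K) F.denom ≠ 0 :=
    RatFunc.algebraMap_ne_zero (RatFunc.denom_ne_zero F)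
  have h2 : NSy f g ∣ Polynomial.C (algebraMap (Polynomial K) (RatFunc K) F.denom) *
      NSy F G := (dvd_mul_left _ _).trans h1
  exact dvd_of_dvd_C_mul hFd h2

lemma NS_dvd_of_NSy_dvd {f g F G : RatFunc K}
    (hf : ¬ ∃ c : K, f = RatFunc.C c) (hF : ¬ ∃ c : K, F = RatFunc.C c)
    (hg : ¬ ∃ c : K, g = RatFunc.C c) (hG : ¬ ∃ c : K, G = RatFunc.C c)
    (hdvdY : NSy f g ∣ NSy F G) : NS f g ∣ NS F G := by
  letI : NormalizationMonoid (Polynomial K) :=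
    UniqueFactorizationMonoid.strongNormalizationMonoid.toNormalizationMonoid
  letI : NormalizedGCDMonoid (Polynomial K) :=
    UniqueFactorizationMonoid.toNormalizedGCDMonoid (Polynomial K)
  rw [dvd_iff_Phi, Phi_NS, Phi_NS]
  have hfd : algebraMap (Polynomial K) (RatFunc K) f.denom ≠ 0 :=
    RatFunc.algebraMap_ne_zero (RatFunc.denom_ne_zero f)
  have hFd : algebraMap (Polynomial K) (RatFunc K) F.denom ≠ 0 :=
    RatFunc.algebraMap_ne_zero (RatFunc.denom_ne_zero F)
  have hdvdmap : (NSP f g).map (algebraMap (Polynomial K) (RatFunc K)) ∣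
      (NSP F G).map (algebraMap (Polynomial K) (RatFunc K)) := by
    rw [map_NSP, map_NSP]
    obtain ⟨c, hc⟩ := hdvdY
    refine ⟨Polynomial.C (algebraMap (Polynomial K) (RatFunc K) f.denom)⁻¹ *
      Polynomial.C (algebraMap (Polynomial K) (RatFunc K) F.denom) * c, ?_⟩
    rw [hc]
    have hone : Polynomial.C (algebraMap (Polynomial K) (RatFunc K) f.denom) *
        Polynomial.C (algebraMap (Polynomial K) (RatFunc K) f.denom)⁻¹ = 1 := by
      rw [← Polynomial.C_mul, mul_inv_cancel₀ hfd, Polynomial.C_1]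
    calc Polynomial.C (algebraMap (Polynomial K) (RatFunc K) F.denom) * (NSy f g * c)
        = (Polynomial.C (algebraMap (Polynomial K) (RatFunc K) f.denom) *
            Polynomial.C (algebraMap (Polynomial K) (RatFunc K) f.denom)⁻¹) *
          (Polynomial.C (algebraMap (Polynomial K) (RatFunc K) F.denom) * (NSy f g * c)) := by
          rw [hone, one_mul]
      _ = Polynomial.C (algebraMap (Polynomial K) (RatFunc K) f.denom) * NSy f g *
          (Polynomial.C (algebraMap (Polynomial K) (RatFunc K) f.denom)⁻¹ *
            Polynomial.C (algebraMap (Polynomial K) (RatFunc K) F.denom) * c) := by ring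
  have hRne : NSP F G ≠ 0 := by
    intro h0
    have hmap := map_NSP F G
    rw [h0, Polynomial.map_zero] at hmap
    rcases mul_eq_zero.mp hmap.symm with h3 | h3
    · rw [Polynomial.C_eq_zero] at h3
      exact hFd h3
    · exact NSy_ne_zero hF hG h3
  have hcontne : algebraMap (Polynomial K) (RatFunc K) (NSP F G).content ≠ 0 :=
    RatFunc.algebraMap_ne_zero (by rwa [Ne, Polynomial.content_eq_zero_iff])
  have h5 : (NSP f g).map (algebraMap (Polynomial K) (RatFunc K)) ∣
      (NSP F G).primPart.map (algebraMap (Polynomial K) (RatFunc K)) := by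
    have hfac := Polynomial.eq_C_content_mul_primPart (NSP F G)
    have hdvd2 : (NSP f g).map (algebraMap (Polynomial K) (RatFunc K)) ∣
        (Polynomial.C (NSP F G).content * (NSP F G).primPart).map
          (algebraMap (Polynomial K) (RatFunc K)) := by
      rw [← hfac]; exact hdvdmap
    rw [Polynomial.map_mul, Polynomial.map_C] at hdvd2
    exact dvd_of_dvd_C_mul hcontne hdvd2
  exact ((NSP_primitive hf hg).dvd_of_fraction_map_dvd_fraction_map
    h5).trans (Polynomial.primPart_dvd (NSP F G))


end NSAux

/-- `f_n g_d − g_n f_d` divides `F_n G_d − G_n F_d` in `K[x,y]` iff `(F,G) = h((f,g))`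
for some rational function `h ∈ K(t)`. -/
theorem statement3 [CharZero K]
    (f F g G : RatFunc K)
    (hf : ¬ ∃ c : K, f = RatFunc.C c) (hF : ¬ ∃ c : K, F = RatFunc.C c)
    (hg : ¬ ∃ c : K, g = RatFunc.C c) (hG : ¬ ∃ c : K, G = RatFunc.C c) :
    NS f g ∣ NS F G ↔
      ∃ h : RatFunc K,
        Polynomial.eval₂ RatFunc.C f h.denom ≠ 0 ∧
        Polynomial.eval₂ RatFunc.C g h.denom ≠ 0 ∧
        comp h f = F ∧ comp h g = G := by
  have tf := NSAux.transcendental_of_nonconst hf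
  have tg := NSAux.transcendental_of_nonconst hg
  constructor
  · intro hdvd
    obtain ⟨h, hhF, hhG⟩ := NSAux.forward hf hg (NSAux.NSy_dvd_of_NS_dvd hdvd)
    refine ⟨h, ?_, ?_, ?_, ?_⟩
    · rw [NSAux.eval₂_ratC]
      exact NSAux.aeval_ne_zero_of_transcendental tf (RatFunc.denom_ne_zero h)
    · rw [NSAux.eval₂_ratC]
      exact NSAux.aeval_ne_zero_of_transcendental tg (RatFunc.denom_ne_zero h)
    · rw [NSAux.comp_eq_psi tf]
      exact hhF
    · rw [NSAux.comp_eq_psi tg]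
      exact hhG
  · rintro ⟨h, hd1, hd2, hcf, hcg⟩
    have hhF : NSAux.psi f tf h = F := by rw [← NSAux.comp_eq_psi tf]; exact hcf
    have hhG : NSAux.psi g tg h = G := by rw [← NSAux.comp_eq_psi tg]; exact hcg
    exact NSAux.NS_dvd_of_NSy_dvd hf hF hg hG (NSAux.NSy_dvd_backward hf hF hg hG hhF hhG)

end
end

section
/- Let K be an algebraically closed field of characteristic 0 and let p ∈ K[x,y] be near-separated. If ω₁ and ω₂ are outward-pointing normal vectors of two distinct edges of the Newton polygon of p, then sign(ω₁) ≠ sign(ω₂), where sign(ω) = (sgn(ω_x), sgn(ω_y)). -/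
open MvPolynomial

noncomputable section

variable {K : Type*} [Field K]

def IsNearSeparated (s : P2 K) : Prop := ∃ f g : RatFunc K, s = NS f g

/-- The `ω`-weight of a monomial exponent vector. -/
def wdeg (ω : ℤ × ℤ) (d : Fin 2 →₀ ℕ) : ℤ := ω.1 * (d 0 : ℤ) + ω.2 * (d 1 : ℤ)

/-- The face of the Newton polygon of `p` in direction `ω`: the set of exponent
vectors of `p` of maximal `ω`-weight. It is an edge iff it has at least two points,
in which case `ω` is an outward-pointing normal of that edge. -/
def face (ω : ℤ × ℤ) (p : P2 K) : Finset (Fin 2 →₀ ℕ) :=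
  p.support.filter (fun d => ∀ e ∈ p.support, wdeg ω e ≤ wdeg ω d)

/-! ### Auxiliary material -/

/-- The exponent pair `(n, m)` as a `Fin 2 →₀ ℕ`. -/
def pt (n m : ℕ) : Fin 2 →₀ ℕ := Finsupp.single 0 n + Finsupp.single 1 m

lemma pt_apply0 (n m : ℕ) : pt n m 0 = n := by
  simp [pt, Finsupp.single_apply]

lemma pt_apply1 (n m : ℕ) : pt n m 1 = m := by
  simp [pt, Finsupp.single_apply]

lemma pt_eq_iff (n m : ℕ) (d : Fin 2 →₀ ℕ) : pt n m = d ↔ d 0 = n ∧ d 1 = m := by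
  constructor
  · rintro rfl
    exact ⟨pt_apply0 n m, pt_apply1 n m⟩
  · rintro ⟨h0, h1⟩
    ext i
    fin_cases i
    · simpa [pt_apply0] using h0.symm
    · simpa [pt_apply1] using h1.symm

lemma wdeg_pt (ω : ℤ × ℤ) (n m : ℕ) : wdeg ω (pt n m) = ω.1 * n + ω.2 * m := by
  simp [wdeg, pt_apply0, pt_apply1]

/-- Coefficient of a product of an `x`-polynomial and a `y`-polynomial. -/
lemma coeff_toX_mul_toY (u v : Polynomial K) (d : Fin 2 →₀ ℕ) :
    MvPolynomial.coeff d (toX u * toY v) = u.coeff (d 0) * v.coeff (d 1) := by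
  induction u using Polynomial.induction_on' with
  | add p q hp hq =>
    have hX : toX (p + q) = toX p + toX q := by simp [toX]
    rw [hX, add_mul, MvPolynomial.coeff_add, hp, hq, Polynomial.coeff_add, add_mul]
  | monomial n a =>
    induction v using Polynomial.induction_on' with
    | add p q hp hq =>
      have hY : toY (p + q) = toY p + toY q := by simp [toY]
      rw [hY, mul_add, MvPolynomial.coeff_add, hp, hq, Polynomial.coeff_add, mul_add]
    | monomial m b =>
      have hx : toX (Polynomial.monomial n a) = MvPolynomial.monomial (Finsupp.single 0 n) a := by
        simp [toX, Polynomial.aeval_monomial, X_pow_eq_monomial, C_mul_monomial]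
      have hy : toY (Polynomial.monomial m b) = MvPolynomial.monomial (Finsupp.single 1 m) b := by
        simp [toY, Polynomial.aeval_monomial, X_pow_eq_monomial, C_mul_monomial]
      rw [hx, hy, MvPolynomial.monomial_mul, MvPolynomial.coeff_monomial,
        Polynomial.coeff_monomial, Polynomial.coeff_monomial]
      have hiff : Finsupp.single 0 n + Finsupp.single 1 m = d ↔ d 0 = n ∧ d 1 = m :=
        pt_eq_iff n m d
      by_cases h : Finsupp.single 0 n + Finsupp.single 1 m = d
      · obtain ⟨h0, h1⟩ := hiff.1 h
        simp [h, h0, h1]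
      · have : ¬ (n = d 0 ∧ m = d 1) := by
          intro ⟨h0, h1⟩; exact h (hiff.2 ⟨h0.symm, h1.symm⟩)
        rw [if_neg h]
        rcases not_and_or.1 this with h' | h'
        · rw [if_neg h', zero_mul]
        · rw [if_neg h', mul_zero]

/-- The generic shape of a near-separated polynomial. -/
def pform (u₁ v₁ v₂ u₂ : Polynomial K) : P2 K := toX u₁ * toY v₁ - toY v₂ * toX u₂

lemma coeff_pform (u₁ v₁ v₂ u₂ : Polynomial K) (d : Fin 2 →₀ ℕ) :
    MvPolynomial.coeff d (pform u₁ v₁ v₂ u₂)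
      = u₁.coeff (d 0) * v₁.coeff (d 1) - v₂.coeff (d 1) * u₂.coeff (d 0) := by
  rw [pform, MvPolynomial.coeff_sub, coeff_toX_mul_toY, mul_comm (toY v₂) (toX u₂),
    coeff_toX_mul_toY]
  ring

/-- The extremal exponent of `u` in direction `w`. -/
def ext' (w : ℤ) (u : Polynomial K) : ℕ :=
  if 0 < w then u.natDegree else u.natTrailingDegree

lemma ext'_congr {w w' : ℤ} (h : w.sign = w'.sign) (u : Polynomial K) :
    ext' w u = ext' w' u := by
  have hiff : 0 < w ↔ 0 < w' := by
    constructor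
    · intro hw
      rw [Int.sign_eq_one_of_pos hw] at h
      rcases lt_trichotomy 0 w' with h' | h' | h'
      · exact h'
      · rw [← h'] at h; simp at h
      · rw [Int.sign_eq_neg_one_of_neg h'] at h; omega
    · intro hw
      rw [Int.sign_eq_one_of_pos hw] at h
      rcases lt_trichotomy 0 w with h' | h' | h'
      · exact h'
      · rw [← h'] at h; simp at h
      · rw [Int.sign_eq_neg_one_of_neg h'] at h; omega
  unfold ext'
  by_cases hw : 0 < w
  · rw [if_pos hw, if_pos (hiff.1 hw)]
  · rw [if_neg hw, if_neg (fun hh => hw (hiff.2 hh))]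

lemma coeff_ext'_ne_zero {u : Polynomial K} (hu : u ≠ 0) (w : ℤ) :
    u.coeff (ext' w u) ≠ 0 := by
  unfold ext'
  split
  · exact Polynomial.mem_support_iff.1 (Polynomial.natDegree_mem_support_of_nonzero hu)
  · exact Polynomial.mem_support_iff.1 (Polynomial.natTrailingDegree_mem_support_of_nonzero hu)

lemma ext'_le {w : ℤ} (hw : w ≠ 0) {u : Polynomial K} {i : ℕ} (hi : u.coeff i ≠ 0) :
    w * i ≤ w * ext' w u := by
  unfold ext'
  rcases lt_or_gt_of_ne hw with hneg | hpos
  · rw [if_neg (by omega)]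
    have : u.natTrailingDegree ≤ i := Polynomial.natTrailingDegree_le_of_ne_zero hi
    have : (u.natTrailingDegree : ℤ) ≤ i := by exact_mod_cast this
    nlinarith
  · rw [if_pos hpos]
    have : i ≤ u.natDegree := Polynomial.le_natDegree_of_ne_zero hi
    have : (i : ℤ) ≤ u.natDegree := by exact_mod_cast this
    nlinarith

lemma ext'_eq_of_weq {w : ℤ} (hw : w ≠ 0) {u : Polynomial K} {i : ℕ}
    (h : w * i = w * ext' w u) : i = ext' w u := by
  have := mul_left_cancel₀ hw h
  exact_mod_cast this

/-- Key lemma: if `ω` has nonzero coordinates and the face is an edge, the face is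
exactly the pair of extremal corners, under a nondegeneracy hypothesis. -/
lemma core {u₁ v₁ v₂ u₂ : Polynomial K}
    (h1 : u₁ ≠ 0) (h2 : v₁ ≠ 0) (h3 : v₂ ≠ 0) (h4 : u₂ ≠ 0)
    (ω : ℤ × ℤ) (hw1 : ω.1 ≠ 0) (hw2 : ω.2 ≠ 0)
    (hnd : pt (ext' ω.1 u₁) (ext' ω.2 v₁) ≠ pt (ext' ω.1 u₂) (ext' ω.2 v₂) ∨
      u₁.coeff (ext' ω.1 u₁) * v₁.coeff (ext' ω.2 v₁)
        ≠ v₂.coeff (ext' ω.2 v₂) * u₂.coeff (ext' ω.1 u₂))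
    (hcard : 2 ≤ (face ω (pform u₁ v₁ v₂ u₂)).card) :
    face ω (pform u₁ v₁ v₂ u₂)
      = {pt (ext' ω.1 u₁) (ext' ω.2 v₁), pt (ext' ω.1 u₂) (ext' ω.2 v₂)} := by
  set p := pform u₁ v₁ v₂ u₂ with hp
  set A := pt (ext' ω.1 u₁) (ext' ω.2 v₁) with hA
  set B := pt (ext' ω.1 u₂) (ext' ω.2 v₂) with hB
  -- bounds for supports of the two products
  have bound1 : ∀ d : Fin 2 →₀ ℕ, u₁.coeff (d 0) ≠ 0 → v₁.coeff (d 1) ≠ 0 →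
      wdeg ω d ≤ wdeg ω A ∧ (wdeg ω d = wdeg ω A → d = A) := by
    intro d hd0 hd1
    have e0 : ω.1 * (d 0 : ℤ) ≤ ω.1 * ext' ω.1 u₁ := ext'_le hw1 hd0
    have e1 : ω.2 * (d 1 : ℤ) ≤ ω.2 * ext' ω.2 v₁ := ext'_le hw2 hd1
    have hw : wdeg ω A = ω.1 * ext' ω.1 u₁ + ω.2 * ext' ω.2 v₁ := wdeg_pt ω _ _
    constructor
    · rw [hw]; unfold wdeg; linarith
    · intro heq
      rw [hw] at heq
      unfold wdeg at heq
      have q0 : ω.1 * (d 0 : ℤ) = ω.1 * ext' ω.1 u₁ := by linarith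
      have q1 : ω.2 * (d 1 : ℤ) = ω.2 * ext' ω.2 v₁ := by linarith
      exact ((pt_eq_iff _ _ d).2 ⟨ext'_eq_of_weq hw1 q0, ext'_eq_of_weq hw2 q1⟩).symm
  have bound2 : ∀ d : Fin 2 →₀ ℕ, u₂.coeff (d 0) ≠ 0 → v₂.coeff (d 1) ≠ 0 →
      wdeg ω d ≤ wdeg ω B ∧ (wdeg ω d = wdeg ω B → d = B) := by
    intro d hd0 hd1
    have e0 : ω.1 * (d 0 : ℤ) ≤ ω.1 * ext' ω.1 u₂ := ext'_le hw1 hd0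
    have e1 : ω.2 * (d 1 : ℤ) ≤ ω.2 * ext' ω.2 v₂ := ext'_le hw2 hd1
    have hw : wdeg ω B = ω.1 * ext' ω.1 u₂ + ω.2 * ext' ω.2 v₂ := wdeg_pt ω _ _
    constructor
    · rw [hw]; unfold wdeg; linarith
    · intro heq
      rw [hw] at heq
      unfold wdeg at heq
      have q0 : ω.1 * (d 0 : ℤ) = ω.1 * ext' ω.1 u₂ := by linarith
      have q1 : ω.2 * (d 1 : ℤ) = ω.2 * ext' ω.2 v₂ := by linarith
      exact ((pt_eq_iff _ _ d).2 ⟨ext'_eq_of_weq hw1 q0, ext'_eq_of_weq hw2 q1⟩).symm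
  -- membership in support gives one of the two branches
  have branch : ∀ d ∈ p.support,
      (u₁.coeff (d 0) ≠ 0 ∧ v₁.coeff (d 1) ≠ 0) ∨
      (u₂.coeff (d 0) ≠ 0 ∧ v₂.coeff (d 1) ≠ 0) := by
    intro d hd
    have hc := MvPolynomial.mem_support_iff.1 hd
    rw [coeff_pform] at hc
    by_contra hcon
    push_neg at hcon
    obtain ⟨hc1, hc2⟩ := hcon
    rcases ne_or_eq (u₁.coeff (d 0)) 0 with h | h
    · rcases ne_or_eq (u₂.coeff (d 0)) 0 with h' | h'
      · rw [hc2 h', hc1 h] at hc; simp at hc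
      · rw [hc1 h, h'] at hc; simp at hc
    · rcases ne_or_eq (u₂.coeff (d 0)) 0 with h' | h'
      · rw [h, hc2 h'] at hc; simp at hc
      · rw [h, h'] at hc; simp at hc
  have cA : u₁.coeff (A 0) * v₁.coeff (A 1)
      = u₁.coeff (ext' ω.1 u₁) * v₁.coeff (ext' ω.2 v₁) := by
    rw [hA, pt_apply0, pt_apply1]
  have cB : v₂.coeff (B 1) * u₂.coeff (B 0)
      = v₂.coeff (ext' ω.2 v₂) * u₂.coeff (ext' ω.1 u₂) := by
    rw [hB, pt_apply0, pt_apply1]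
  have cAne : u₁.coeff (ext' ω.1 u₁) * v₁.coeff (ext' ω.2 v₁) ≠ 0 :=
    mul_ne_zero (coeff_ext'_ne_zero h1 _) (coeff_ext'_ne_zero h2 _)
  have cBne : v₂.coeff (ext' ω.2 v₂) * u₂.coeff (ext' ω.1 u₂) ≠ 0 :=
    mul_ne_zero (coeff_ext'_ne_zero h3 _) (coeff_ext'_ne_zero h4 _)
  rcases lt_trichotomy (wdeg ω A) (wdeg ω B) with hlt | heqw | hgt
  · -- face ⊆ {B} : contradiction with card
    exfalso
    -- B ∈ support
    have hBsupp : B ∈ p.support := by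
      rw [MvPolynomial.mem_support_iff, coeff_pform]
      intro hzero
      by_cases h : u₁.coeff (B 0) * v₁.coeff (B 1) = 0
      · rw [h, cB, zero_sub, neg_eq_zero] at hzero
        exact cBne hzero
      · have hb := bound1 B (fun hh => h (by rw [hh, zero_mul]))
          (fun hh => h (by rw [hh, mul_zero]))
        linarith [hb.1]
    have hsub : ∀ d ∈ face ω p, d = B := by
      intro d hd
      rw [face, Finset.mem_filter] at hd
      obtain ⟨hdsupp, hdmax⟩ := hd
      have hge : wdeg ω B ≤ wdeg ω d := hdmax B hBsupp
      rcases branch d hdsupp with ⟨hb0, hb1⟩ | ⟨hb0, hb1⟩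
      · have := (bound1 d hb0 hb1).1; linarith
      · exact (bound2 d hb0 hb1).2 (le_antisymm ((bound2 d hb0 hb1).1) hge)
    have : (face ω p).card ≤ 1 := Finset.card_le_one.2 (fun a ha b hb => by
      rw [hsub a ha, hsub b hb])
    omega
  · -- equal weights
    by_cases hAB : A = B
    · -- degenerate position: coefficient at A is cA - cB ≠ 0 by hnd
      exfalso
      have hcoeff : u₁.coeff (ext' ω.1 u₁) * v₁.coeff (ext' ω.2 v₁)
          ≠ v₂.coeff (ext' ω.2 v₂) * u₂.coeff (ext' ω.1 u₂) := by
        rcases hnd with h | h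
        · exact absurd hAB h
        · exact h
      have hAsupp : A ∈ p.support := by
        rw [MvPolynomial.mem_support_iff, coeff_pform]
        intro hzero
        rw [cA] at hzero
        have : v₂.coeff (A 1) * u₂.coeff (A 0) = v₂.coeff (ext' ω.2 v₂) * u₂.coeff (ext' ω.1 u₂) := by
          rw [hAB]; exact cB
        rw [this] at hzero
        exact hcoeff (sub_eq_zero.1 hzero)
      have hsub : ∀ d ∈ face ω p, d = A := by
        intro d hd
        rw [face, Finset.mem_filter] at hd
        obtain ⟨hdsupp, hdmax⟩ := hd
        have hge : wdeg ω A ≤ wdeg ω d := hdmax A hAsupp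
        rcases branch d hdsupp with ⟨hb0, hb1⟩ | ⟨hb0, hb1⟩
        · exact (bound1 d hb0 hb1).2 (le_antisymm ((bound1 d hb0 hb1).1) hge)
        · have hge' : wdeg ω B ≤ wdeg ω d := heqw ▸ hge
          have := (bound2 d hb0 hb1).2 (le_antisymm ((bound2 d hb0 hb1).1) hge')
          rw [this, hAB]
      have : (face ω p).card ≤ 1 := Finset.card_le_one.2 (fun a ha b hb => by
        rw [hsub a ha, hsub b hb])
      omega
    · -- main case: face = {A, B}
      have hAsupp : A ∈ p.support := by
        rw [MvPolynomial.mem_support_iff, coeff_pform]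
        intro hzero
        rw [cA] at hzero
        have h2' : v₂.coeff (A 1) * u₂.coeff (A 0) ≠ 0 := by
          intro hh
          rw [hh, sub_zero] at hzero
          exact cAne hzero
        have hb := bound2 A (fun hh => h2' (by rw [hh, mul_zero]))
          (fun hh => h2' (by rw [hh, zero_mul]))
        exact hAB (hb.2 heqw)
      have hBsupp : B ∈ p.support := by
        rw [MvPolynomial.mem_support_iff, coeff_pform]
        intro hzero
        rw [cB] at hzero
        have h1' : u₁.coeff (B 0) * v₁.coeff (B 1) ≠ 0 := by
          intro hh
          rw [hh, zero_sub, neg_eq_zero] at hzero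
          exact cBne hzero
        have hb := bound1 B (fun hh => h1' (by rw [hh, zero_mul]))
          (fun hh => h1' (by rw [hh, mul_zero]))
        exact hAB ((hb.2 heqw.symm).symm)
      apply Finset.ext
      intro d
      rw [face, Finset.mem_filter, Finset.mem_insert, Finset.mem_singleton]
      constructor
      · rintro ⟨hdsupp, hdmax⟩
        have hge : wdeg ω A ≤ wdeg ω d := hdmax A hAsupp
        rcases branch d hdsupp with ⟨hb0, hb1⟩ | ⟨hb0, hb1⟩
        · exact Or.inl ((bound1 d hb0 hb1).2 (le_antisymm ((bound1 d hb0 hb1).1) hge))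
        · exact Or.inr ((bound2 d hb0 hb1).2
            (le_antisymm ((bound2 d hb0 hb1).1) (by linarith)))
      · rintro (rfl | rfl)
        · refine ⟨hAsupp, fun e he => ?_⟩
          rcases branch e he with ⟨hb0, hb1⟩ | ⟨hb0, hb1⟩
          · exact (bound1 e hb0 hb1).1
          · linarith [(bound2 e hb0 hb1).1]
        · refine ⟨hBsupp, fun e he => ?_⟩
          rcases branch e he with ⟨hb0, hb1⟩ | ⟨hb0, hb1⟩
          · linarith [(bound1 e hb0 hb1).1]
          · exact (bound2 e hb0 hb1).1
  · -- symmetric to first case: face ⊆ {A}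
    exfalso
    have hAsupp : A ∈ p.support := by
      rw [MvPolynomial.mem_support_iff, coeff_pform]
      intro hzero
      rw [cA] at hzero
      by_cases h : v₂.coeff (A 1) * u₂.coeff (A 0) = 0
      · rw [h, sub_zero] at hzero
        exact cAne hzero
      · have hb := bound2 A (fun hh => h (by rw [hh, mul_zero]))
          (fun hh => h (by rw [hh, zero_mul]))
        linarith [hb.1]
    have hsub : ∀ d ∈ face ω p, d = A := by
      intro d hd
      rw [face, Finset.mem_filter] at hd
      obtain ⟨hdsupp, hdmax⟩ := hd
      have hge : wdeg ω A ≤ wdeg ω d := hdmax A hAsupp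
      rcases branch d hdsupp with ⟨hb0, hb1⟩ | ⟨hb0, hb1⟩
      · exact (bound1 d hb0 hb1).2 (le_antisymm ((bound1 d hb0 hb1).1) hge)
      · have := (bound2 d hb0 hb1).1; linarith
    have : (face ω p).card ≤ 1 := Finset.card_le_one.2 (fun a ha b hb => by
      rw [hsub a ha, hsub b hb])
    omega

/-- A pure product has singleton faces in quadrant directions. -/
lemma face_prod_card {u v : Polynomial K} (hu : u ≠ 0) (hv : v ≠ 0)
    (ω : ℤ × ℤ) (hw1 : ω.1 ≠ 0) (hw2 : ω.2 ≠ 0) :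
    (face ω (toX u * toY v)).card ≤ 1 := by
  set C := pt (ext' ω.1 u) (ext' ω.2 v) with hC
  have hsub : ∀ d ∈ face ω (toX u * toY v), d = C := by
    intro d hd
    rw [face, Finset.mem_filter] at hd
    obtain ⟨hdsupp, hdmax⟩ := hd
    have hd' := MvPolynomial.mem_support_iff.1 hdsupp
    rw [coeff_toX_mul_toY] at hd'
    have hd0 : u.coeff (d 0) ≠ 0 := fun h => hd' (by rw [h, zero_mul])
    have hd1 : v.coeff (d 1) ≠ 0 := fun h => hd' (by rw [h, mul_zero])
    have hCsupp : C ∈ (toX u * toY v).support := by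
      rw [MvPolynomial.mem_support_iff, coeff_toX_mul_toY, hC, pt_apply0, pt_apply1]
      exact mul_ne_zero (coeff_ext'_ne_zero hu _) (coeff_ext'_ne_zero hv _)
    have hge : wdeg ω C ≤ wdeg ω d := hdmax C hCsupp
    have e0 : ω.1 * (d 0 : ℤ) ≤ ω.1 * ext' ω.1 u := ext'_le hw1 hd0
    have e1 : ω.2 * (d 1 : ℤ) ≤ ω.2 * ext' ω.2 v := ext'_le hw2 hd1
    have hwC : wdeg ω C = ω.1 * ext' ω.1 u + ω.2 * ext' ω.2 v := wdeg_pt ω _ _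
    have hwd : wdeg ω d = ω.1 * (d 0 : ℤ) + ω.2 * (d 1 : ℤ) := rfl
    have q0 : ω.1 * (d 0 : ℤ) = ω.1 * ext' ω.1 u := by omega
    have q1 : ω.2 * (d 1 : ℤ) = ω.2 * ext' ω.2 v := by omega
    exact ((pt_eq_iff _ _ d).2 ⟨ext'_eq_of_weq hw1 q0, ext'_eq_of_weq hw2 q1⟩).symm
  exact Finset.card_le_one.2 (fun a ha b hb => by rw [hsub a ha, hsub b hb])

lemma face_congr {p : P2 K} {ω₁ ω₂ : ℤ × ℤ}
    (h : ∀ e d : Fin 2 →₀ ℕ, wdeg ω₁ e ≤ wdeg ω₁ d ↔ wdeg ω₂ e ≤ wdeg ω₂ d) :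
    face ω₁ p = face ω₂ p := by
  unfold face
  apply Finset.filter_congr
  intro d _
  constructor
  · intro hh e he; exact (h e d).1 (hh e he)
  · intro hh e he; exact (h e d).2 (hh e he)

lemma sign_mul_le_iff {a b : ℤ} (ha : a ≠ 0) (hs : a.sign = b.sign) (x y : ℤ) :
    a * x ≤ a * y ↔ b * x ≤ b * y := by
  rcases lt_or_gt_of_ne ha with hneg | hpos
  · have hb : b < 0 := by
      have : a.sign = -1 := Int.sign_eq_neg_one_of_neg hneg
      rw [this] at hs
      rcases lt_trichotomy b 0 with h | h | h
      · exact h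
      · subst h; simp at hs
      · rw [Int.sign_eq_one_of_pos h] at hs; omega
    rw [mul_le_mul_left_of_neg hneg, ← mul_le_mul_left_of_neg hb]
  · have hb : 0 < b := by
      have : a.sign = 1 := Int.sign_eq_one_of_pos hpos
      rw [this] at hs
      rcases lt_trichotomy b 0 with h | h | h
      · rw [Int.sign_eq_neg_one_of_neg h] at hs; omega
      · subst h; simp at hs
      · exact h
    rw [mul_le_mul_iff_of_pos_left hpos, mul_le_mul_iff_of_pos_left hb]

lemma face_empty (ω : ℤ × ℤ) : face ω (0 : P2 K) = ∅ := by
  unfold face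
  rw [MvPolynomial.support_zero, Finset.filter_empty]

lemma face_neg (ω : ℤ × ℤ) (p : P2 K) : face ω (-p) = face ω p := by
  have h : (-p).support = p.support := MvPolynomial.support_neg _
  unfold face
  rw [h]

/-- If `p` is near-separated and `ω₁, ω₂` are outward-pointing normals of two
distinct edges of the Newton polygon of `p`, then `sign ω₁ ≠ sign ω₂`. -/
theorem statement8 [IsAlgClosed K] [CharZero K]
    (p : P2 K) (hsep : IsNearSeparated p)
    (ω₁ ω₂ : ℤ × ℤ)
    (h1 : 2 ≤ (face ω₁ p).card) (h2 : 2 ≤ (face ω₂ p).card)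
    (hdist : face ω₁ p ≠ face ω₂ p) :
    (Int.sign ω₁.1, Int.sign ω₁.2) ≠ (Int.sign ω₂.1, Int.sign ω₂.2) := by
  intro heq
  rw [Prod.mk.injEq] at heq
  obtain ⟨hs1, hs2⟩ := heq
  apply hdist
  by_cases hx : ω₁.1 = 0
  · -- first coordinates are zero
    have hx2 : ω₂.1 = 0 := by
      have : (0 : ℤ).sign = ω₂.1.sign := by rw [← hx]; exact hs1
      simpa using Int.sign_eq_zero_iff_zero.1 this.symm
    by_cases hy : ω₁.2 = 0
    · have hy2 : ω₂.2 = 0 := by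
        have : (0 : ℤ).sign = ω₂.2.sign := by rw [← hy]; exact hs2
        simpa using Int.sign_eq_zero_iff_zero.1 this.symm
      apply face_congr
      intro e d
      simp [wdeg, hx, hy, hx2, hy2]
    · have hy2 : ω₂.2 ≠ 0 := by
        intro hz
        rw [hz] at hs2
        exact hy (Int.sign_eq_zero_iff_zero.1 (by simpa using hs2))
      apply face_congr
      intro e d
      have := sign_mul_le_iff hy hs2 (e 1) (d 1)
      simpa [wdeg, hx, hx2] using this
  · by_cases hy : ω₁.2 = 0
    · have hx2 : ω₂.1 ≠ 0 := by
        intro hz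
        rw [hz] at hs1
        exact hx (Int.sign_eq_zero_iff_zero.1 (by simpa using hs1))
      have hy2 : ω₂.2 = 0 := by
        have : (0 : ℤ).sign = ω₂.2.sign := by rw [← hy]; exact hs2
        simpa using Int.sign_eq_zero_iff_zero.1 this.symm
      apply face_congr
      intro e d
      have := sign_mul_le_iff hx hs1 (e 0) (d 0)
      simpa [wdeg, hy, hy2] using this
    · -- quadrant case
      have hx2 : ω₂.1 ≠ 0 := by
        intro hz
        rw [hz] at hs1
        exact hx (Int.sign_eq_zero_iff_zero.1 (by simpa using hs1))
      have hy2 : ω₂.2 ≠ 0 := by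
        intro hz
        rw [hz] at hs2
        exact hy (Int.sign_eq_zero_iff_zero.1 (by simpa using hs2))
      obtain ⟨f, g, rfl⟩ := hsep
      -- names for the four univariate polynomials
      set u₁ := f.num with hu₁
      set v₁ := g.denom with hv₁
      set v₂ := g.num with hv₂
      set u₂ := f.denom with hu₂
      have hNS : NS f g = pform u₁ v₁ v₂ u₂ := rfl
      have hu₂0 : u₂ ≠ 0 := f.denom_ne_zero
      have hv₁0 : v₁ ≠ 0 := g.denom_ne_zero
      rw [hNS] at h1 h2 ⊢
      by_cases hu₁0 : u₁ = 0
      · exfalso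
        by_cases hv₂0 : v₂ = 0
        · have hz : pform u₁ v₁ v₂ u₂ = 0 := by
            rw [pform, hu₁0, hv₂0]; simp [toX, toY]
          rw [hz, face_empty] at h1
          simp at h1
        · have : pform u₁ v₁ v₂ u₂ = -(toX u₂ * toY v₂) := by
            rw [pform, hu₁0]
            simp [toX]
            ring
          rw [this, face_neg] at h1
          have := face_prod_card hu₂0 hv₂0 ω₁ hx hy
          omega
      · by_cases hv₂0 : v₂ = 0
        · exfalso
          have : pform u₁ v₁ v₂ u₂ = toX u₁ * toY v₁ := by
            rw [pform, hv₂0]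
            simp [toY]
          rw [this] at h1
          have := face_prod_card hu₁0 hv₁0 ω₁ hx hy
          omega
        · -- all four nonzero
          have hext1 : ext' ω₂.1 u₁ = ext' ω₁.1 u₁ := ext'_congr hs1.symm u₁
          have hext2 : ext' ω₂.2 v₁ = ext' ω₁.2 v₁ := ext'_congr hs2.symm v₁
          have hext3 : ext' ω₂.2 v₂ = ext' ω₁.2 v₂ := ext'_congr hs2.symm v₂
          have hext4 : ext' ω₂.1 u₂ = ext' ω₁.1 u₂ := ext'_congr hs1.symm u₂
          by_cases hnd : pt (ext' ω₁.1 u₁) (ext' ω₁.2 v₁) ≠ pt (ext' ω₁.1 u₂) (ext' ω₁.2 v₂) ∨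
              u₁.coeff (ext' ω₁.1 u₁) * v₁.coeff (ext' ω₁.2 v₁)
                ≠ v₂.coeff (ext' ω₁.2 v₂) * u₂.coeff (ext' ω₁.1 u₂)
          · have e1 := core hu₁0 hv₁0 hv₂0 hu₂0 ω₁ hx hy hnd h1
            have hnd2 : pt (ext' ω₂.1 u₁) (ext' ω₂.2 v₁) ≠ pt (ext' ω₂.1 u₂) (ext' ω₂.2 v₂) ∨
                u₁.coeff (ext' ω₂.1 u₁) * v₁.coeff (ext' ω₂.2 v₁)
                  ≠ v₂.coeff (ext' ω₂.2 v₂) * u₂.coeff (ext' ω₂.1 u₂) := by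
              rw [hext1, hext2, hext3, hext4]; exact hnd
            have e2 := core hu₁0 hv₁0 hv₂0 hu₂0 ω₂ hx2 hy2 hnd2 h2
            rw [e1, e2, hext1, hext2, hext3, hext4]
          · -- degenerate case; renormalize
            push_neg at hnd
            obtain ⟨hABeq, hceq⟩ := hnd
            have hn : ext' ω₁.1 u₂ = ext' ω₁.1 u₁ ∧ ext' ω₁.2 v₂ = ext' ω₁.2 v₁ := by
              have := (pt_eq_iff _ _ _).1 hABeq
              rw [pt_apply0, pt_apply1] at this
              exact this
            set n := ext' ω₁.1 u₁ with hnn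
            set m := ext' ω₁.2 v₁ with hmm
            set lam := u₁.coeff n / u₂.coeff n with hlam
            have hu2c : u₂.coeff n ≠ 0 := by
              have := coeff_ext'_ne_zero hu₂0 ω₁.1
              rwa [hn.1] at this
            have hv1c : v₁.coeff m ≠ 0 := coeff_ext'_ne_zero hv₁0 ω₁.2
            have hlmul : lam * u₂.coeff n = u₁.coeff n := div_mul_cancel₀ _ hu2c
            have hlmul2 : lam * v₁.coeff m = v₂.coeff m := by
              rw [hn.1, hn.2] at hceq
              rw [hlam, div_mul_eq_mul_div, div_eq_iff hu2c]
              rw [mul_comm (v₂.coeff m) (u₂.coeff n)] at hceq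
              linear_combination hceq
            set u₁' := u₁ - Polynomial.C lam * u₂ with hu₁'
            set v₂' := v₂ - Polynomial.C lam * v₁ with hv₂'
            have hpeq : pform u₁ v₁ v₂ u₂ = pform u₁' v₁ v₂' u₂ := by
              rw [pform, pform, hu₁', hv₂']
              simp only [toX, toY, map_sub, map_mul, Polynomial.aeval_C]
              ring
            rw [hpeq] at h1 h2 ⊢
            by_cases hu₁'0 : u₁' = 0
            · exfalso
              by_cases hv₂'0 : v₂' = 0
              · rw [show pform u₁' v₁ v₂' u₂ = 0 by
                  rw [pform, hu₁'0, hv₂'0]; simp [toX, toY]] at h1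
                rw [face_empty] at h1
                simp at h1
              · have : pform u₁' v₁ v₂' u₂ = -(toX u₂ * toY v₂') := by
                  rw [pform, hu₁'0]
                  simp [toX]
                  ring
                rw [this, face_neg] at h1
                have := face_prod_card hu₂0 hv₂'0 ω₁ hx hy
                omega
            · by_cases hv₂'0 : v₂' = 0
              · exfalso
                have : pform u₁' v₁ v₂' u₂ = toX u₁' * toY v₁ := by
                  rw [pform, hv₂'0]
                  simp [toY]
                rw [this] at h1
                have := face_prod_card hu₁'0 hv₁0 ω₁ hx hy
                omega
              · -- now the new configuration is nondegenerate
                have hcoeffn : u₁'.coeff n = 0 := by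
                  rw [hu₁']
                  simp only [Polynomial.coeff_sub, Polynomial.coeff_C_mul]
                  rw [← hlmul]; ring
                have hextne : ext' ω₁.1 u₁' ≠ ext' ω₁.1 u₂ := by
                  rw [hn.1]
                  intro hcon
                  have := coeff_ext'_ne_zero hu₁'0 ω₁.1
                  rw [hcon] at this
                  exact this hcoeffn
                have hnd' : pt (ext' ω₁.1 u₁') (ext' ω₁.2 v₁) ≠ pt (ext' ω₁.1 u₂) (ext' ω₁.2 v₂') ∨
                    u₁'.coeff (ext' ω₁.1 u₁') * v₁.coeff (ext' ω₁.2 v₁)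
                      ≠ v₂'.coeff (ext' ω₁.2 v₂') * u₂.coeff (ext' ω₁.1 u₂) := by
                  left
                  intro hcon
                  have := (pt_eq_iff _ _ _).1 hcon
                  rw [pt_apply0, pt_apply1] at this
                  exact hextne this.1.symm
                have hext1' : ext' ω₂.1 u₁' = ext' ω₁.1 u₁' := ext'_congr hs1.symm u₁'
                have hext3' : ext' ω₂.2 v₂' = ext' ω₁.2 v₂' := ext'_congr hs2.symm v₂'
                have e1 := core hu₁'0 hv₁0 hv₂'0 hu₂0 ω₁ hx hy hnd' h1
                have hnd2' : pt (ext' ω₂.1 u₁') (ext' ω₂.2 v₁) ≠ pt (ext' ω₂.1 u₂) (ext' ω₂.2 v₂') ∨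
                    u₁'.coeff (ext' ω₂.1 u₁') * v₁.coeff (ext' ω₂.2 v₁)
                      ≠ v₂'.coeff (ext' ω₂.2 v₂') * u₂.coeff (ext' ω₂.1 u₂) := by
                  rw [hext1', hext2, hext3', hext4]; exact hnd'
                have e2 := core hu₁'0 hv₁0 hv₂'0 hu₂0 ω₂ hx2 hy2 hnd2' h2
                rw [e1, e2, hext1', hext2, hext3', hext4]
end
end
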